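/- arXiv:1611.08143 — 4 statements merged into one kernel-verified Lean document; each statement's English description precedes it below -/
import Mathlib

section
/- Assume 𝔟 = 𝔠. Then Laver forcing has the disjoint maximal antichain property: there is a maximal antichain (T_α : α < 𝔠) of Laver trees with [T_α] ∩ [T_β] = ∅ for all α ≠ β. -/
/-- The restriction `x↾n` of a sequence `x ∈ ω^ω` to its first `n` values, as a finite sequence. -/
def seqRestrict (x : ℕ → ℕ) (n : ℕ) : List ℕ := List.ofFn fun i : Fin n => x i

/-- A tree on `ω`: a nonempty set of finite sequences closed under initial segments. -/
def IsSeqTree (T : Set (List ℕ)) : Prop :=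
  T.Nonempty ∧ ∀ s ∈ T, ∀ t : List ℕ, t <+: s → t ∈ T

/-- `[T]`, the set of branches of a tree `T ⊆ ω^{<ω}`. -/
def branches (T : Set (List ℕ)) : Set (ℕ → ℕ) := {x | ∀ n : ℕ, seqRestrict x n ∈ T}

/-- `S` and `T` are compatible in `𝕋` (ordered by inclusion) if they have a common extension. -/
def Compat (𝕋 : Set (Set (List ℕ))) (S T : Set (List ℕ)) : Prop :=
  ∃ R ∈ 𝕋, R ⊆ S ∧ R ⊆ T

/-- `T` is a Laver tree with stem `st`: `st ∈ T` is comparable with every node of `T`, and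
every node extending `st` has infinitely many immediate successors in `T`. -/
def IsLaverWithStem (T : Set (List ℕ)) (st : List ℕ) : Prop :=
  IsSeqTree T ∧ st ∈ T ∧ (∀ t ∈ T, t <+: st ∨ st <+: t) ∧
    ∀ t ∈ T, st <+: t → {n : ℕ | t ++ [n] ∈ T}.Infinite

/-- A Laver tree. -/
def IsLaver (T : Set (List ℕ)) : Prop := ∃ st : List ℕ, IsLaverWithStem T st

/-- The bounding number `𝔟`: the least cardinality of a family `F ⊆ ω^ω` unbounded with
respect to eventual domination `≤*`. -/
noncomputable def boundingNumber : Cardinal :=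
  sInf {c : Cardinal | ∃ F : Set (ℕ → ℕ), Cardinal.mk F = c ∧
    ∀ f : ℕ → ℕ, ∃ g ∈ F, ¬ (∀ᶠ n in Filter.atTop, g n ≤ f n)}


lemma seqRestrict_length (x : ℕ → ℕ) (n : ℕ) : (seqRestrict x n).length = n := by
  simp [seqRestrict]

lemma seqRestrict_succ (x : ℕ → ℕ) (n : ℕ) :
    seqRestrict x (n+1) = seqRestrict x n ++ [x n] := by
  show List.ofFn _ = _
  rw [List.ofFn_succ']
  simp [seqRestrict, List.concat_eq_append, Fin.castSucc]

lemma seqRestrict_get (x : ℕ → ℕ) (n i : ℕ) (h : i < (seqRestrict x n).length) :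
    (seqRestrict x n).get ⟨i, h⟩ = x i := by
  simp [seqRestrict]

lemma seqRestrict_prefix (x : ℕ → ℕ) {m n : ℕ} (h : m ≤ n) :
    seqRestrict x m <+: seqRestrict x n := by
  induction n with
  | zero => simp_all
  | succ n ih =>
    rcases Nat.lt_or_ge m (n+1) with h' | h'
    · exact (ih (Nat.lt_succ_iff.mp h')).trans (by rw [seqRestrict_succ]; exact ⟨[x n], rfl⟩)
    · have : m = n + 1 := le_antisymm h h'
      subst this; exact List.prefix_refl _

lemma seqRestrict_injective (x : ℕ → ℕ) : Function.Injective (seqRestrict x) := by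
  intro m n h
  have := congrArg List.length h
  simpa [seqRestrict_length] using this

lemma branches_mono {S T : Set (List ℕ)} (h : S ⊆ T) : branches S ⊆ branches T :=
  fun _ hz n => h (hz n)

/-- every Laver tree has a branch -/
lemma IsLaverWithStem.branches_nonempty {T : Set (List ℕ)} {st : List ℕ}
    (h : IsLaverWithStem T st) : (branches T).Nonempty := by
  obtain ⟨hTree, hst, _hcmp, hsplit⟩ := h
  -- chain of nodes
  let P : Type := {l : List ℕ // l ∈ T ∧ st <+: l}
  have step : ∀ p : P, {n : ℕ | p.1 ++ [n] ∈ T}.Infinite := fun p => hsplit p.1 p.2.1 p.2.2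
  let next : P → P := fun p =>
    ⟨p.1 ++ [(step p).nonempty.choose],
      (step p).nonempty.choose_spec, p.2.2.trans ⟨_, rfl⟩⟩
  let L : ℕ → P := fun n => next^[n] ⟨st, hst, List.prefix_refl st⟩
  have Lsucc : ∀ n, (L (n+1)).1 = (L n).1 ++ [(step (L n)).nonempty.choose] := by
    intro n
    show (next^[n+1] _).1 = _
    rw [Function.iterate_succ_apply']
  have Llen : ∀ n, (L n).1.length = st.length + n := by
    intro n; induction n with
    | zero => rfl
    | succ n ih => rw [Lsucc n]; simp [ih]; omega
  have Lchain : ∀ m n, m ≤ n → (L m).1 <+: (L n).1 := by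
    intro m n h
    induction n with
    | zero => simp_all
    | succ n ih =>
      rcases Nat.lt_or_ge m (n+1) with h' | h'
      · exact (ih (Nat.lt_succ_iff.mp h')).trans (by rw [Lsucc n]; exact ⟨_, rfl⟩)
      · have : m = n+1 := le_antisymm h h'
        subst this; exact List.prefix_refl _
  -- define branch
  have hget : ∀ n, n < (L (n+1)).1.length := by
    intro n; rw [Llen]; omega
  let z : ℕ → ℕ := fun n => (L (n+1)).1.get ⟨n, hget n⟩
  have key : ∀ n, seqRestrict z n = (L n).1.take n := by
    intro n
    apply List.ext_get
    · simp [seqRestrict_length, List.length_take, Llen]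
    · intro i h1 h2
      rw [seqRestrict_get]
      have hi : i < n := by simpa [seqRestrict_length] using h1
      have hpre : (L (i+1)).1 <+: (L n).1 := Lchain _ _ hi
      show z i = (List.take n (L n).1)[i]'h2
      rw [List.getElem_take]
      exact (List.IsPrefix.getElem hpre (hget i))
  refine ⟨z, fun n => ?_⟩
  rw [key n]
  exact hTree.2 (L n).1 (L n).2.1 _ (List.take_prefix _ _)

/-- parity bit -/
def pbit (a : ℕ → Bool) (i : ℕ) : ℕ := cond (a i) 1 0

/-- The level-parity Laver tree with stem `t` and pattern `a`. -/
def parityTree (t : List ℕ) (a : ℕ → Bool) : Set (List ℕ) :=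
  {s | (s <+: t ∨ t <+: s) ∧
    ∀ i : ℕ, ∀ h : i < s.length, t.length ≤ i → s[i] % 2 = pbit a i}

lemma parityTree_isLaver (t : List ℕ) (a : ℕ → Bool) :
    IsLaverWithStem (parityTree t a) t := by
  have hmem : t ∈ parityTree t a := ⟨Or.inl (List.prefix_refl t), fun i h hi => by omega⟩
  refine ⟨⟨⟨t, hmem⟩, ?_⟩, hmem, fun s hs => hs.1, ?_⟩
  · -- prefix closed
    rintro s ⟨hcmp, hpar⟩ u hu
    refine ⟨?_, ?_⟩
    · rcases hcmp with h | h
      · exact Or.inl (hu.trans h)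
      · rcases Nat.le_or_le u.length t.length with hl | hl
        · exact Or.inl (List.prefix_of_prefix_length_le hu h hl)
        · exact Or.inr (List.prefix_of_prefix_length_le h hu hl)
    · intro i h hi
      rw [List.IsPrefix.getElem hu h]
      exact hpar i (h.trans_le hu.length_le) hi
  · -- splitting
    rintro s ⟨hcmp, hpar⟩ hst
    have : {n : ℕ | n % 2 = pbit a s.length} ⊆ {n : ℕ | s ++ [n] ∈ parityTree t a} := by
      intro n hn
      refine ⟨Or.inr (hst.trans ⟨[n], rfl⟩), ?_⟩
      intro i h hi
      rcases Nat.lt_or_ge i s.length with h' | h'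
      · rw [List.getElem_append_left h']
        exact hpar i h' hi
      · have hieq : i = s.length := by simp at h; omega
        subst hieq
        simpa using hn
    refine Set.Infinite.mono this ?_
    apply Set.infinite_of_injective_forall_mem (f := fun k : ℕ => 2 * k + pbit a s.length)
      (hi := fun x y hxy => by simp at hxy; omega)
    intro k; simp only [Set.mem_setOf_eq, pbit]; cases a s.length <;> simp <;> omega
lemma parityTree_branch_pattern {t : List ℕ} {a : ℕ → Bool} {z : ℕ → ℕ}
    (hz : z ∈ branches (parityTree t a)) :
    (∀ i, t.length ≤ i → z i % 2 = pbit a i) ∧ ∀ i : ℕ, ∀ h : i < t.length, z i = t[i] := by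
  constructor
  · intro i hi
    have := (hz (i+1)).2 i (by rw [seqRestrict_length]; omega) hi
    rwa [show (seqRestrict z (i+1))[i]'(by rw [seqRestrict_length]; omega) = z i from
      seqRestrict_get z (i+1) i _] at this
  · intro i h
    -- seqRestrict z t.length = t
    have hcmp := (hz t.length).1
    have hlen : (seqRestrict z t.length).length = t.length := seqRestrict_length _ _
    have heq : seqRestrict z t.length = t := by
      rcases hcmp with hp | hp
      · exact List.IsPrefix.eq_of_length hp hlen
      · exact (List.IsPrefix.eq_of_length hp hlen.symm).symm
    have h2 := seqRestrict_get z t.length i (by rw [hlen]; omega)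
    rw [← h2, List.get_eq_getElem]
    have : ∀ (u : List ℕ) (hu : u = t) (hh : i < u.length), u[i] = t[i] := by
      rintro u rfl hh; rfl
    exact this _ heq _

lemma prefix_comparable {l1 l2 l3 : List ℕ} (h1 : l1 <+: l3) (h2 : l2 <+: l3) :
    l1 <+: l2 ∨ l2 <+: l1 := by
  rcases Nat.le_or_le l1.length l2.length with h | h
  · exact Or.inl (List.prefix_of_prefix_length_le h1 h2 h)
  · exact Or.inr (List.prefix_of_prefix_length_le h2 h1 h)

lemma prefix_concat_cases {u s : List ℕ} {n : ℕ} (h : u <+: s ++ [n]) :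
    u <+: s ∨ u = s ++ [n] := by
  rcases Nat.lt_or_ge u.length (s++[n]).length with hl | hl
  · left
    have hle : u.length ≤ s.length := by simp at hl; omega
    exact List.prefix_of_prefix_length_le h (List.prefix_append s [n]) hle
  · right; exact List.IsPrefix.eq_of_length h (le_antisymm h.length_le hl)

/-! ### the derivative hierarchy -/

noncomputable def Dfun (U : Set (List ℕ)) (ξ : Ordinal.{0}) : Set (List ℕ) :=
  {t | t ∈ U ∧ ∀ ζ : Ordinal.{0}, ζ < ξ → {n : ℕ | t ++ [n] ∈ Dfun U ζ}.Infinite}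
termination_by ξ
decreasing_by exact ‹_ < ξ›

lemma Dfun_mem_iff {U : Set (List ℕ)} {ξ : Ordinal} {t : List ℕ} :
    t ∈ Dfun U ξ ↔ t ∈ U ∧ ∀ ζ : Ordinal, ζ < ξ → {n : ℕ | t ++ [n] ∈ Dfun U ζ}.Infinite := by
  rw [Dfun]; rfl

lemma Dfun_subset (U : Set (List ℕ)) (ξ : Ordinal) : Dfun U ξ ⊆ U :=
  fun _ ht => (Dfun_mem_iff.mp ht).1

lemma Dfun_antitone {U : Set (List ℕ)} {ξ ξ' : Ordinal} (h : ξ ≤ ξ') :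
    Dfun U ξ' ⊆ Dfun U ξ := by
  intro t ht
  rw [Dfun_mem_iff] at ht ⊢
  exact ⟨ht.1, fun ζ hζ => ht.2 ζ (hζ.trans_le h)⟩

def Wset (U : Set (List ℕ)) : Set (List ℕ) := {t | ∀ ξ : Ordinal.{0}, t ∈ Dfun U ξ}

lemma Wset_subset (U : Set (List ℕ)) : Wset U ⊆ U := fun t ht => Dfun_subset U 0 (ht 0)

lemma Wset_succ {U : Set (List ℕ)} {t : List ℕ} (ht : t ∈ Wset U) :
    {n : ℕ | t ++ [n] ∈ Wset U}.Infinite := by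
  classical
  set δ : ℕ → Ordinal.{0} := fun n => sInf {ξ | t ++ [n] ∉ Dfun U ξ} with hδ
  set δs : Ordinal.{0} := iSup δ with hδs
  have hsub : {n : ℕ | t ++ [n] ∈ Dfun U δs} ⊆ {n : ℕ | t ++ [n] ∈ Wset U} := by
    intro n hn ξ
    by_contra hbad
    have hne : {ξ : Ordinal | t ++ [n] ∉ Dfun U ξ}.Nonempty := ⟨ξ, hbad⟩
    have hmem : t ++ [n] ∉ Dfun U (δ n) := csInf_mem hne
    have hle : δ n ≤ δs := le_ciSup (by exact Ordinal.bddAbove_range δ) n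
    exact hmem (Dfun_antitone hle hn)
  have hinf : {n : ℕ | t ++ [n] ∈ Dfun U δs}.Infinite := by
    have := (Dfun_mem_iff.mp (ht (δs + 1))).2 δs (by exact Order.lt_succ δs)
    exact this
  exact hinf.mono hsub

/-- a nonempty `Wset` yields a common Laver subtree -/
lemma compat_of_wset {S T : Set (List ℕ)} (hS : IsSeqTree S) (hT : IsSeqTree T)
    {t₀ : List ℕ} (h0 : t₀ ∈ Wset (S ∩ T)) :
    ∃ R, IsLaver R ∧ R ⊆ S ∧ R ⊆ T := by
  classical
  set U := S ∩ T with hU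
  set R : Set (List ℕ) :=
    {s | s <+: t₀ ∨ (t₀ <+: s ∧ ∀ u, t₀ <+: u → u <+: s → u ∈ Wset U)} with hR
  have ht0R : t₀ ∈ R := Or.inr ⟨List.prefix_refl _, fun u h1 h2 => by
    have : u = t₀ := List.IsPrefix.eq_of_length h2 (le_antisymm h2.length_le h1.length_le)
    rwa [this]⟩
  have hRW : ∀ s ∈ R, t₀ <+: s → s ∈ Wset U := by
    rintro s (hs | hs) hts
    · have : s = t₀ := List.IsPrefix.eq_of_length hs (le_antisymm hs.length_le hts.length_le)
      rwa [this]
    · exact hs.2 s hts (List.prefix_refl _)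
  have hRU : R ⊆ U := by
    rintro s (hs | hs)
    · have ht0U : t₀ ∈ U := Wset_subset U h0
      exact ⟨hS.2 t₀ ht0U.1 s hs, hT.2 t₀ ht0U.2 s hs⟩
    · exact Wset_subset U (hs.2 s hs.1 (List.prefix_refl _))
  refine ⟨R, ⟨t₀, ⟨⟨t₀, ht0R⟩, ?_⟩, ht0R, ?_, ?_⟩, fun s hs => (hRU hs).1, fun s hs => (hRU hs).2⟩
  · -- prefix closed
    rintro s hs v hv
    rcases hs with hs | hs
    · exact Or.inl (hv.trans hs)
    · rcases prefix_comparable hv hs.1 with h | h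
      · exact Or.inl h
      · exact Or.inr ⟨h, fun u h1 h2 => hs.2 u h1 (h2.trans hv)⟩
  · -- comparability
    rintro s (hs | hs)
    · exact Or.inl hs
    · exact Or.inr hs.1
  · -- splitting
    intro s hsR hts
    have hsW : s ∈ Wset U := hRW s hsR hts
    refine (Wset_succ hsW).mono ?_
    intro n hn
    refine Or.inr ⟨hts.trans ⟨[n], rfl⟩, ?_⟩
    intro u h1 h2
    rcases prefix_concat_cases h2 with h | h
    · rcases hsR with hs | hs
      · have : s = t₀ := List.IsPrefix.eq_of_length hs (le_antisymm hs.length_le hts.length_le)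
        subst this
        have : u = s := List.IsPrefix.eq_of_length h (le_antisymm h.length_le h1.length_le)
        rwa [this]
      · exact hs.2 u h1 h
    · rwa [h]

/-! ### the avoidance lemma -/

open Filter in
lemma avoid
    (hbdd : ∀ F : Set (ℕ → ℕ), Cardinal.mk F < Cardinal.continuum →
      ∃ f : ℕ → ℕ, ∀ g ∈ F, ∀ᶠ k in atTop, g k ≤ f k)
    {S : Set (List ℕ)} {stS : List ℕ} (hS : IsLaverWithStem S stS)
    (G : Set (Set (List ℕ))) (hGcard : Cardinal.mk G < Cardinal.continuum)
    (hGL : ∀ T ∈ G, IsLaver T)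
    (hGinc : ∀ T ∈ G, ¬ ∃ R, IsLaver R ∧ R ⊆ S ∧ R ⊆ T) :
    ∃ T', IsLaverWithStem T' stS ∧ T' ⊆ S ∧ ∀ T ∈ G, branches T' ∩ branches T = ∅ := by
  classical
  -- the intersection trees
  set U : G → Set (List ℕ) := fun β => S ∩ β.1 with hUdef
  -- all Wsets are empty
  have hW : ∀ β : G, ∀ t : List ℕ, t ∉ Wset (U β) := by
    intro β t ht
    obtain ⟨stT, hT⟩ := hGL β.1 β.2
    exact hGinc β.1 β.2 (compat_of_wset hS.1 hT.1 ht)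
  -- rank function
  have hΦne : ∀ β : G, ∀ t : List ℕ, {ξ : Ordinal.{0} | t ∉ Dfun (U β) ξ}.Nonempty := by
    intro β t
    by_contra h
    exact hW β t (fun ξ => by
      by_contra h2
      exact h ⟨ξ, h2⟩)
  set Φ : G → List ℕ → Ordinal.{0} := fun β t => sInf {ξ | t ∉ Dfun (U β) ξ} with hΦdef
  have hΦ_dead : ∀ β t, t ∉ Dfun (U β) (Φ β t) := fun β t => csInf_mem (hΦne β t)
  have hΦ_alive : ∀ β t ζ, ζ < Φ β t → t ∈ Dfun (U β) ζ := by
    intro β t ζ hζ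
    by_contra h
    exact absurd (csInf_le' (s := {ξ | t ∉ Dfun (U β) ξ}) h) (not_le.mpr hζ)
  -- extraction of the finite bad-successor sets
  have hzeta : ∀ β : G, ∀ t ∈ U β,
      ∃ ζ : Ordinal.{0}, ζ < Φ β t ∧ {n : ℕ | t ++ [n] ∈ Dfun (U β) ζ}.Finite := by
    intro β t htU
    have := hΦ_dead β t
    rw [Dfun_mem_iff] at this
    push_neg at this
    obtain ⟨ζ, hζ, hfin⟩ := this htU
    exact ⟨ζ, hζ, hfin⟩
  set g : G → ℕ → ℕ := fun β k =>
    (Encodable.decode (α := List ℕ) k).elim 0 (fun t =>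
      if h : ∃ ζ : Ordinal.{0}, ζ < Φ β t ∧ {n : ℕ | t ++ [n] ∈ Dfun (U β) ζ}.Finite then
        (if hf : {n : ℕ | t ++ [n] ∈ Dfun (U β) (Classical.choose h)}.Finite then
          hf.toFinset.sup id + 1 else 0)
      else 0) with hgdef
  -- the rank-descent step
  have hstep : ∀ β : G, ∀ t ∈ U β, ∀ m : ℕ, t ++ [m] ∈ U β →
      g β (Encodable.encode t) ≤ m → Φ β (t ++ [m]) < Φ β t := by
    intro β t htU m hmU hgm
    obtain h := hzeta β t htU
    have hg : g β (Encodable.encode t) =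
        (if hf : {n : ℕ | t ++ [n] ∈ Dfun (U β) (Classical.choose h)}.Finite then
          hf.toFinset.sup id + 1 else 0) := by
      rw [hgdef]
      simp only [Encodable.encodek, Option.elim_some, dif_pos h]
    obtain ⟨hζlt, hζfin⟩ := Classical.choose_spec h
    rw [dif_pos hζfin] at hg
    have hnot : t ++ [m] ∉ Dfun (U β) (Classical.choose h) := by
      intro hmem
      have : m ∈ hζfin.toFinset := by simpa using hmem
      have : m ≤ hζfin.toFinset.sup id := Finset.le_sup (f := id) this
      omega
    have : Φ β (t ++ [m]) ≤ Classical.choose h := csInf_le' hnot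
    exact this.trans_lt hζlt
  -- dominating function
  obtain ⟨f, hf⟩ := hbdd (Set.range (fun β : G => g β))
    ((Cardinal.mk_range_le).trans_lt hGcard)
  have hfg : ∀ β : G, ∀ᶠ k in atTop, g β k ≤ f k := fun β => hf _ ⟨β, rfl⟩
  -- the pruned tree
  set T' : Set (List ℕ) :=
    {t | t ∈ S ∧ ∀ i : ℕ, ∀ hi : i < t.length, stS.length ≤ i →
      f (Encodable.encode (t.take i)) < t[i]} with hT'def
  have hT'S : T' ⊆ S := fun t ht => ht.1
  have hstT' : stS ∈ T' := ⟨hS.2.1, fun i hi hsti => by omega⟩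
  have hT'L : IsLaverWithStem T' stS := by
    refine ⟨⟨⟨stS, hstT'⟩, ?_⟩, hstT', fun t ht => hS.2.2.1 t ht.1, ?_⟩
    · -- prefix closed
      rintro s ⟨hsS, hpar⟩ u hu
      refine ⟨hS.1.2 s hsS u hu, ?_⟩
      intro i hi hsti
      have htake : u.take i = s.take i := by
        obtain ⟨w, rfl⟩ := hu
        rw [List.take_append_of_le_length (by omega)]
      rw [htake, List.IsPrefix.getElem hu hi]
      exact hpar i (hi.trans_le hu.length_le) hsti
    · -- splitting
      rintro s ⟨hsS, hpar⟩ hsts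
      have hsplit := hS.2.2.2 s hsS hsts
      have hsub : {n : ℕ | n ∈ {n : ℕ | s ++ [n] ∈ S} ∧ f (Encodable.encode s) < n} ⊆
          {n : ℕ | s ++ [n] ∈ T'} := by
        rintro n ⟨hnS, hnf⟩
        refine ⟨hnS, ?_⟩
        intro i hi hsti
        rcases Nat.lt_or_ge i s.length with h' | h'
        · rw [List.take_append_of_le_length (by omega), List.getElem_append_left h']
          exact hpar i h' hsti
        · have : i = s.length := by simp at hi; omega
          subst this
          rw [List.take_append_of_le_length (le_refl _), List.take_length,
            List.getElem_append_right (le_refl _)]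
          simpa using hnf
      refine Set.Infinite.mono hsub ?_
      have : {n : ℕ | n ∈ {n : ℕ | s ++ [n] ∈ S} ∧ f (Encodable.encode s) < n} =
          {n : ℕ | s ++ [n] ∈ S} \ {n : ℕ | n ≤ f (Encodable.encode s)} := by
        ext n
        simp only [Set.mem_setOf_eq, Set.mem_diff]
        constructor <;> rintro ⟨h1, h2⟩ <;> exact ⟨h1, by omega⟩
      rw [this]
      exact Set.Infinite.diff hsplit (Set.finite_le_nat _)
  refine ⟨T', hT'L, hT'S, ?_⟩
  -- disjointness of branches
  intro T hTG
  by_contra hne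
  obtain ⟨z, hzT', hzT⟩ := Set.nonempty_iff_ne_empty.mpr hne
  set β : G := ⟨T, hTG⟩ with hβ
  have hzU : ∀ n : ℕ, seqRestrict z n ∈ U β := fun n => ⟨branches_mono hT'S hzT' n, hzT n⟩
  -- eventually dominated
  obtain ⟨K, hK⟩ := (hfg β).exists_forall_of_atTop
  -- find N
  have hEfin : {n : ℕ | Encodable.encode (seqRestrict z n) < K}.Finite := by
    have heq : {n : ℕ | Encodable.encode (seqRestrict z n) < K} =
        (fun n => Encodable.encode (seqRestrict z n)) ⁻¹' (Set.Iio K) := rfl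
    rw [heq]
    apply Set.Finite.preimage
    · intro x _ y _ hxy
      exact seqRestrict_injective z (Encodable.encode_injective hxy)
    · exact Set.finite_Iio K
  obtain ⟨N0, hN0⟩ := hEfin.bddAbove
  set N : ℕ := max (N0 + 1) stS.length with hN
  have hNbig : ∀ n, N ≤ n → K ≤ Encodable.encode (seqRestrict z n) ∧ stS.length ≤ n := by
    intro n hn
    constructor
    · by_contra h
      have : n ∈ {n : ℕ | Encodable.encode (seqRestrict z n) < K} := by
        simp [Set.mem_setOf_eq]; omega
      have := hN0 this
      omega
    · omega
  -- strictly decreasing ordinal sequence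
  have hdec : ∀ k : ℕ, Φ β (seqRestrict z (N + (k+1))) < Φ β (seqRestrict z (N + k)) := by
    intro k
    set n := N + k with hn
    have h1 : seqRestrict z (n+1) = seqRestrict z n ++ [z n] := seqRestrict_succ z n
    have h2 : seqRestrict z n ∈ U β := hzU n
    have h3 : seqRestrict z n ++ [z n] ∈ U β := h1 ▸ hzU (n+1)
    have h4 : g β (Encodable.encode (seqRestrict z n)) ≤ z n := by
      have hKe : K ≤ Encodable.encode (seqRestrict z n) := (hNbig n (by omega)).1
      have hgle : g β (Encodable.encode (seqRestrict z n)) ≤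
          f (Encodable.encode (seqRestrict z n)) := hK _ hKe
      -- T' condition
      have hmem := hzT' (n+1)
      have hcond := hmem.2 n (by rw [seqRestrict_length]; omega) ((hNbig n (by omega)).2)
      have htake : (seqRestrict z (n+1)).take n = seqRestrict z n := by
        rw [h1, List.take_append_of_le_length (by rw [seqRestrict_length])]
        exact List.take_of_length_le (by rw [seqRestrict_length])
      have hget : (seqRestrict z (n+1))[n]'(by rw [seqRestrict_length]; omega) = z n := by
        have := seqRestrict_get z (n+1) n (by rw [seqRestrict_length]; omega)
        simpa using this
      rw [htake, hget] at hcond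
      omega
    have := hstep β (seqRestrict z n) h2 (z n) h3 h4
    rwa [show N + (k+1) = n + 1 by omega, h1]
  -- contradiction: no strictly decreasing sequence of ordinals
  set φ : ℕ → Ordinal.{0} := fun k => Φ β (seqRestrict z (N + k)) with hφ
  have : ∀ k, φ (k+1) < φ k := hdec
  obtain ⟨k0, hk0⟩ := Ordinal.lt_wf.has_min (Set.range φ) ⟨φ 0, 0, rfl⟩
  obtain ⟨⟨k1, rfl⟩, hmin⟩ := hk0
  exact hmin (φ (k1+1)) ⟨k1+1, rfl⟩ (this k1)

/-! ## small auxliary lemmas -/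

lemma pbit_inj {a b : ℕ → Bool} (h : ∀ i, pbit a i = pbit b i) : a = b := by
  funext i
  have := h i
  cases ha : a i <;> cases hb : b i <;> simp_all [pbit]

lemma bdd_of_b_eq_c (hb : boundingNumber = Cardinal.continuum) :
    ∀ F : Set (ℕ → ℕ), Cardinal.mk F < Cardinal.continuum →
      ∃ f : ℕ → ℕ, ∀ g ∈ F, ∀ᶠ k in Filter.atTop, g k ≤ f k := by
  intro F hF
  by_contra h
  push_neg at h
  have hmem : Cardinal.mk F ∈ {c : Cardinal | ∃ F : Set (ℕ → ℕ), Cardinal.mk F = c ∧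
      ∀ f : ℕ → ℕ, ∃ g ∈ F, ¬ (∀ᶠ n in Filter.atTop, g n ≤ f n)} := by
    refine ⟨F, rfl, fun f => ?_⟩
    obtain ⟨g, hg1, hg2⟩ := h f
    exact ⟨g, hg1, Filter.not_eventually.mpr (hg2.mono fun n hn => not_le.mpr hn)⟩
  have : boundingNumber ≤ Cardinal.mk F := csInf_le' hmem
  rw [hb] at this
  exact absurd hF (not_lt.mpr this)

lemma no_common_of_disjoint_branches {A B : Set (List ℕ)}
    (h : branches A ∩ branches B = ∅) :
    ¬ ∃ R, IsLaver R ∧ R ⊆ A ∧ R ⊆ B := by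
  rintro ⟨R, ⟨st, hR⟩, hRA, hRB⟩
  obtain ⟨z, hz⟩ := hR.branches_nonempty
  have : z ∈ branches A ∩ branches B := ⟨branches_mono hRA hz, branches_mono hRB hz⟩
  rw [h] at this
  exact this

lemma mk_set_list : Cardinal.mk (Set (List ℕ)) = Cardinal.continuum := by
  rw [Cardinal.mk_set, Cardinal.mk_list_eq_aleph0, Cardinal.continuum]

lemma mk_nat_bool : Cardinal.mk (ℕ → Bool) = Cardinal.continuum := by
  rw [← Cardinal.power_def, Cardinal.mk_bool, Cardinal.mk_denumerable, Cardinal.continuum]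

lemma parityTree_nil_inj : Function.Injective (fun a : ℕ → Bool => parityTree [] a) := by
  intro a b hab
  have hab' : parityTree [] a = parityTree [] b := hab
  obtain ⟨z, hz⟩ := (parityTree_isLaver [] a).branches_nonempty
  have hzb : z ∈ branches (parityTree [] b) := by rw [← hab']; exact hz
  have ha := (parityTree_branch_pattern hz).1
  have hb := (parityTree_branch_pattern hzb).1
  exact pbit_inj fun i => (ha i (by simp)).symm.trans (hb i (by simp))

lemma mk_laver : Cardinal.mk {T : Set (List ℕ) // IsLaver T} = Cardinal.continuum := by
  apply le_antisymm
  · rw [← mk_set_list]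
    exact Cardinal.mk_subtype_le _
  · rw [← mk_nat_bool]
    exact Cardinal.mk_le_of_injective (f := fun a : ℕ → Bool =>
      (⟨parityTree [] a, [], parityTree_isLaver [] a⟩ : {T : Set (List ℕ) // IsLaver T}))
      (fun a b hab => parityTree_nil_inj (by simpa using congrArg Subtype.val hab))


/-- Assuming `𝔟 = 𝔠`, Laver forcing has the disjoint maximal antichain property: there is a
maximal antichain `(T_α : α < 𝔠)` of Laver trees with pairwise disjoint branch sets. -/
theorem laver_disjointMaxAntichain_of_b_eq_c (hb : boundingNumber = Cardinal.continuum) :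
    ∃ (ι : Type) (Tfam : ι → Set (List ℕ)),
      Cardinal.mk ι = Cardinal.continuum ∧
      (∀ a : ι, IsLaver (Tfam a)) ∧
      (∀ a b : ι, a ≠ b →
        ¬ ∃ R : Set (List ℕ), IsLaver R ∧ R ⊆ Tfam a ∧ R ⊆ Tfam b) ∧
      (∀ T : Set (List ℕ), IsLaver T →
        ∃ a : ι, ∃ R : Set (List ℕ), IsLaver R ∧ R ⊆ T ∧ R ⊆ Tfam a) ∧
      (∀ a b : ι, a ≠ b → branches (Tfam a) ∩ branches (Tfam b) = ∅) := by
  classical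
  have hbdd := bdd_of_b_eq_c hb
  -- the index well-order
  set KT := Cardinal.continuum.ord.ToType with hKT
  have hKTcard : Cardinal.mk KT = Cardinal.continuum := by
    rw [hKT, Cardinal.mk_toType, Cardinal.card_ord]
  obtain ⟨e⟩ : Nonempty (KT ≃ {T : Set (List ℕ) // IsLaver T}) :=
    Cardinal.eq.mp (hKTcard.trans mk_laver.symm)
  have wf : WellFounded ((· < ·) : KT → KT → Prop) := IsWellFounded.wf
  -- the specification of a tree added at stage i, relative to earlier choices
  set Spec' : ∀ i : KT, (∀ j : KT, j < i → Option (Set (List ℕ))) → Set (List ℕ) → Prop :=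
    fun i prev T' =>
      IsLaver T' ∧ T' ⊆ (e i).1 ∧
      (∀ j : KT, ∀ hj : j < i, ∀ T'', prev j hj = some T'' →
        branches T' ∩ branches T'' = ∅) ∧
      ((∃ t a, T' ⊆ parityTree t a) ∨
        (∀ R t a, ¬ (IsLaver R ∧ R ⊆ T' ∧ R ⊆ parityTree t a))) with hSpec'
  set body : ∀ i : KT, (∀ j : KT, j < i → Option (Set (List ℕ))) → Option (Set (List ℕ)) :=
    fun i prev => if h : ∃ T', Spec' i prev T' then some (Classical.choose h) else none
    with hbody
  set member : KT → Option (Set (List ℕ)) := wf.fix body with hmember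
  have hmem_eq : ∀ i, member i = body i (fun j _ => member j) := fun i =>
    WellFounded.fix_eq wf body i
  set Spec : KT → Set (List ℕ) → Prop := fun i => Spec' i (fun j _ => member j) with hSpec
  have hsome : ∀ i T', member i = some T' → Spec i T' := by
    intro i T' hi
    rw [hmem_eq i] at hi
    by_cases h : ∃ T'', Spec' i (fun j _ => member j) T''
    · rw [hbody] at hi
      simp only [dif_pos h] at hi
      cases hi
      exact Classical.choose_spec h
    · rw [hbody] at hi
      simp only [dif_neg h] at hi
      exact nomatch hi
  have hnone : ∀ i, member i = none → ¬ ∃ T', Spec i T' := by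
    intro i hi h
    rw [hmem_eq i, hbody] at hi
    simp only [dif_pos h] at hi
    exact absurd hi (by rw [dif_pos (show ∃ T', Spec' i (fun j _ => member j) T' from h)]; exact Option.some_ne_none _)
  -- earlier members
  set Gset : KT → Set (Set (List ℕ)) := fun i => {T | ∃ j : KT, ∃ _ : j < i, member j = some T}
    with hGset
  have hGcard : ∀ i : KT, Cardinal.mk (Gset i) < Cardinal.continuum := by
    intro i
    have hinj : ∃ F : (Gset i) → (Set.Iio i), Function.Injective F := by
      refine ⟨fun T => ⟨Classical.choose T.2, (Classical.choose_spec T.2).1⟩, ?_⟩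
      intro T1 T2 h12
      have e1 := (Classical.choose_spec T1.2).2
      have e2 := (Classical.choose_spec T2.2).2
      have h12 : Classical.choose T1.2 = Classical.choose T2.2 := congrArg Subtype.val h12
      rw [h12] at e1
      rw [e1] at e2
      exact Subtype.ext (Option.some_injective _ e2)
    obtain ⟨F, hF⟩ := hinj
    exact (Cardinal.mk_le_of_injective hF).trans_lt (Cardinal.mk_Iio_ord_toType i)
  have hGL : ∀ i, ∀ T ∈ Gset i, IsLaver T := by
    rintro i T ⟨j, hj, hmem⟩
    exact (hsome j T hmem).1
  -- the key dichotomy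
  have key : ∀ i : KT, ∀ (W : Set (List ℕ)) (stW : List ℕ), IsLaverWithStem W stW →
      W ⊆ (e i).1 →
      (∃ T0 ∈ Gset i, ∃ R, IsLaver R ∧ R ⊆ W ∧ R ⊆ T0) ∨
      (∃ T'', IsLaverWithStem T'' stW ∧ T'' ⊆ W ∧
        ∀ T ∈ Gset i, branches T'' ∩ branches T = ∅) := by
    intro i W stW hW hWe
    by_cases hC : ∃ T0 ∈ Gset i, ∃ R, IsLaver R ∧ R ⊆ W ∧ R ⊆ T0
    · exact Or.inl hC
    · push_neg at hC
      obtain ⟨T'', h1, h2, h3⟩ := avoid hbdd hW (Gset i) (hGcard i) (hGL i)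
        (fun T hT => by
          intro ⟨R, hR1, hR2, hR3⟩
          exact hC T hT R hR1 hR2 hR3)
      exact Or.inr ⟨T'', h1, h2, h3⟩
  -- every stage is handled
  have hmax : ∀ i : KT, ∃ Tm, (∃ j, member j = some Tm) ∧
      ∃ R, IsLaver R ∧ R ⊆ (e i).1 ∧ R ⊆ Tm := by
    intro i
    cases hmi : member i with
    | some T' =>
      have hs := hsome i T' hmi
      exact ⟨T', ⟨i, hmi⟩, T', hs.1, hs.2.1, subset_rfl⟩
    | none =>
      have hni := hnone i hmi
      by_cases hA : ∃ (t : List ℕ) (a : ℕ → Bool) (W : Set (List ℕ)) (stW : List ℕ),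
          IsLaverWithStem W stW ∧ W ⊆ (e i).1 ∧ W ⊆ parityTree t a
      · obtain ⟨t, a, W, stW, hW, hWe, hWp⟩ := hA
        rcases key i W stW hW hWe with ⟨T0, hT0, R, hR1, hR2, hR3⟩ | ⟨T'', h1, h2, h3⟩
        · obtain ⟨j, _, hm⟩ := hT0
          exact ⟨T0, ⟨j, hm⟩, R, hR1, hR2.trans hWe, hR3⟩
        · exfalso
          apply hni
          refine ⟨T'', ⟨stW, h1⟩, h2.trans hWe, ?_, Or.inl ⟨t, a, h2.trans hWp⟩⟩
          intro j hj T3 hT3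
          exact h3 T3 ⟨j, hj, hT3⟩
      · obtain ⟨stE, hE⟩ := (e i).2
        rcases key i (e i).1 stE hE subset_rfl with ⟨T0, hT0, R, hR1, hR2, hR3⟩ |
          ⟨T'', h1, h2, h3⟩
        · obtain ⟨j, _, hm⟩ := hT0
          exact ⟨T0, ⟨j, hm⟩, R, hR1, hR2, hR3⟩
        · exfalso
          apply hni
          refine ⟨T'', ⟨stE, h1⟩, h2, ?_, Or.inr ?_⟩
          · intro j hj T3 hT3
            exact h3 T3 ⟨j, hj, hT3⟩
          · rintro R t a ⟨⟨stR, hR1⟩, hR2, hR3⟩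
            exact hA ⟨t, a, R, stR, hR1, hR2.trans h2, hR3⟩
  -- pairwise disjointness of members
  have hpair : ∀ (i j : KT) (Ti Tj : Set (List ℕ)), i ≠ j → member i = some Ti →
      member j = some Tj → branches Ti ∩ branches Tj = ∅ := by
    have aux : ∀ (i j : KT) (Ti Tj : Set (List ℕ)), j < i → member i = some Ti →
        member j = some Tj → branches Ti ∩ branches Tj = ∅ := by
      intro i j Ti Tj hji hi hj
      exact (hsome i Ti hi).2.2.1 j hji Tj hj
    intro i j Ti Tj hne hi hj
    rcases lt_or_gt_of_ne hne with h | h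
    · rw [Set.inter_comm]
      exact aux j i Tj Ti h hj hi
    · exact aux i j Ti Tj h hi hj
  -- the family
  set M : Set (Set (List ℕ)) := {T | ∃ i : KT, member i = some T} with hM
  have hML : ∀ T ∈ M, IsLaver T := by
    rintro T ⟨i, hi⟩
    exact (hsome i T hi).1
  have hMdisj : ∀ T1 ∈ M, ∀ T2 ∈ M, T1 ≠ T2 → branches T1 ∩ branches T2 = ∅ := by
    rintro T1 ⟨i, hi⟩ T2 ⟨j, hj⟩ hne
    have hij : i ≠ j := by
      rintro rfl
      rw [hi] at hj
      exact hne (Option.some_injective _ hj)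
    exact hpair i j T1 T2 hij hi hj
  have hMmax : ∀ T : Set (List ℕ), IsLaver T →
      ∃ Tm ∈ M, ∃ R, IsLaver R ∧ R ⊆ T ∧ R ⊆ Tm := by
    intro T hT
    obtain ⟨i, hi⟩ := e.surjective ⟨T, hT⟩
    obtain ⟨Tm, ⟨j, hj⟩, R, hR1, hR2, hR3⟩ := hmax i
    rw [hi] at hR2
    exact ⟨Tm, ⟨j, hj⟩, R, hR1, hR2, hR3⟩
  -- cardinality
  have hMcard : Cardinal.mk M = Cardinal.continuum := by
    apply le_antisymm
    · rw [← mk_set_list]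
      exact Cardinal.mk_subtype_le _
    · choose Tsel hTselM Rsel hRselL hRselP hRselM using
        fun a : ℕ → Bool => hMmax (parityTree [] a) ⟨[], parityTree_isLaver [] a⟩
      rw [← mk_nat_bool]
      refine Cardinal.mk_le_of_injective (f := fun a => (⟨Tsel a, hTselM a⟩ : M)) ?_
      intro a b hab
      rw [Subtype.mk_eq_mk] at hab
      -- the common member
      obtain ⟨i, hi⟩ := hTselM a
      have hspec := hsome i (Tsel a) hi
      rcases hspec.2.2.2 with ⟨t, c, hsub⟩ | htypeB
      · -- type A
        obtain ⟨stA, hRA⟩ := hRselL a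
        obtain ⟨za, hza⟩ := hRA.branches_nonempty
        obtain ⟨stB, hRB⟩ := hRselL b
        obtain ⟨zb, hzb⟩ := hRB.branches_nonempty
        have hzaP : za ∈ branches (parityTree [] a) := branches_mono (hRselP a) hza
        have hzaC : za ∈ branches (parityTree t c) :=
          branches_mono ((hRselM a).trans hsub) hza
        have hzbP : zb ∈ branches (parityTree [] b) := branches_mono (hRselP b) hzb
        have hzbC : zb ∈ branches (parityTree t c) :=
          branches_mono ((hRselM b).trans (hab ▸ hsub)) hzb
        apply pbit_inj
        intro k
        have ha1 := (parityTree_branch_pattern hzaP).1 k (by simp)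
        have hb1 := (parityTree_branch_pattern hzbP).1 k (by simp)
        rcases Nat.lt_or_ge k t.length with hk | hk
        · have ha2 := (parityTree_branch_pattern hzaC).2 k hk
          have hb2 := (parityTree_branch_pattern hzbC).2 k hk
          rw [← ha1, ← hb1, ha2, hb2]
        · have ha2 := (parityTree_branch_pattern hzaC).1 k hk
          have hb2 := (parityTree_branch_pattern hzbC).1 k hk
          rw [← ha1, ← hb1, ha2, hb2]
      · -- type B : contradiction
        exact absurd ⟨hRselL a, hRselM a, hRselP a⟩ (htypeB (Rsel a) [] a)
  -- assemble
  refine ⟨M, Subtype.val, hMcard, ?_, ?_, ?_, ?_⟩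
  · exact fun a => hML a.1 a.2
  · intro a b hne
    apply no_common_of_disjoint_branches
    exact hMdisj a.1 a.2 b.1 b.2 (fun h => hne (Subtype.ext h))
  · intro T hT
    obtain ⟨Tm, hTm, R, hR⟩ := hMmax T hT
    exact ⟨⟨Tm, hTm⟩, R, hR⟩
  · intro a b hne
    exact hMdisj a.1 a.2 b.1 b.2 (fun h => hne (Subtype.ext h))
end

section
/- Let 𝕋 be a combinatorial tree forcing that has the selective disjoint antichain property. Then the cofinality of the cardinal cof(t⁰) is strictly greater than 𝔠, i.e. cf(cof(t⁰)) > 2^{ℵ₀}. -/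
/-- A combinatorial tree forcing: a collection `𝕋` of trees on `ω` containing the full tree,
closed under restrictions `T_s`, with large disjoint antichains, and homogeneous. -/
structure CombTreeForcing (𝕋 : Set (Set (List ℕ))) : Prop where
  /-- every member of `𝕋` is a tree -/
  isTree : ∀ T ∈ 𝕋, IsSeqTree T
  /-- (1) `ω^{<ω} ∈ 𝕋` -/
  univ_mem : (Set.univ : Set (List ℕ)) ∈ 𝕋
  /-- (2) closure under subtrees `T_s` -/
  restrict_mem : ∀ T ∈ 𝕋, ∀ s ∈ T, {t ∈ T | s <+: t ∨ t <+: s} ∈ 𝕋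
  /-- (3) large disjoint antichains: a continuous `f : ω^ω → 2^ω` all of whose fibers are
  branch sets of trees in `𝕋` -/
  large_disjoint : ∃ f : (ℕ → ℕ) → (ℕ → Bool), Continuous f ∧
      ∀ x : ℕ → Bool, ∃ T ∈ 𝕋, f ⁻¹' {x} = branches T
  /-- (4) homogeneity: below every `T ∈ 𝕋` there is an order-preserving injective copy
  `i : ω^{<ω} → T` of the full tree inducing a homeomorphism `g : ω^ω → [T]`,
  `g(x) = ⋃_n i(x↾n)`, such that `S ∈ 𝕋` iff the downward closure of `i''S` is in `𝕋`. -/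
  homogeneity : ∀ T ∈ 𝕋, ∃ i : List ℕ → List ℕ,
      Function.Injective i ∧ (∀ s t : List ℕ, s <+: t → i s <+: i t) ∧
      (∀ s : List ℕ, i s ∈ T) ∧
      ∃ g : (ℕ → ℕ) → (ℕ → ℕ),
        (∀ (x : ℕ → ℕ) (n : ℕ),
          i (seqRestrict x n) = seqRestrict (g x) (i (seqRestrict x n)).length) ∧
        Topology.IsEmbedding g ∧ Set.range g = branches T ∧
        ∀ S : Set (List ℕ), IsSeqTree S → (S ∈ 𝕋 ↔ {t | ∃ s ∈ S, t <+: i s} ∈ 𝕋)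

/-- `𝕋` has the selective disjoint antichain property: there is an antichain `(T_α : α < 𝔠)`
with pairwise disjoint branch sets such that below every `T ∈ 𝕋` there is `S ∈ 𝕋` which
either lies below some `T_α`, or satisfies `|[S] ∩ [T_α]| ≤ 1` for all `α`. -/
def SelectiveDisjointAntichainProp (𝕋 : Set (Set (List ℕ))) : Prop :=
  ∃ (ι : Type) (Tfam : ι → Set (List ℕ)),
    Cardinal.mk ι = Cardinal.continuum ∧
    (∀ a : ι, Tfam a ∈ 𝕋) ∧
    (∀ a b : ι, a ≠ b → ¬ Compat 𝕋 (Tfam a) (Tfam b)) ∧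
    (∀ a b : ι, a ≠ b → branches (Tfam a) ∩ branches (Tfam b) = ∅) ∧
    ∀ T ∈ 𝕋, ∃ S ∈ 𝕋, S ⊆ T ∧
      ((∃ a : ι, S ⊆ Tfam a) ∨ ∀ a : ι, (branches S ∩ branches (Tfam a)).Subsingleton)

/-- The tree ideal `t⁰` associated with `𝕋`: all `X ⊆ ω^ω` such that below every `T ∈ 𝕋`
there is `S ∈ 𝕋` with `X ∩ [S] = ∅`. -/
def treeIdeal (𝕋 : Set (Set (List ℕ))) : Set (Set (ℕ → ℕ)) :=
  {X | ∀ T ∈ 𝕋, ∃ S ∈ 𝕋, S ⊆ T ∧ X ∩ branches S = ∅}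

/-- The cofinality `cof(I)` of an ideal `I`: the least cardinality of a family `J ⊆ I`
such that every member of `I` is contained in a member of `J`. -/
noncomputable def idealCof (I : Set (Set (ℕ → ℕ))) : Cardinal :=
  sInf {c : Cardinal | ∃ J ⊆ I, Cardinal.mk J = c ∧ ∀ X ∈ I, ∃ Y ∈ J, X ⊆ Y}

namespace CTF

@[simp] lemma seqRestrict_length (x : ℕ → ℕ) (n : ℕ) : (seqRestrict x n).length = n := by
  simp [seqRestrict]

lemma seqRestrict_take (x : ℕ → ℕ) {m n : ℕ} (h : m ≤ n) :
    (seqRestrict x n).take m = seqRestrict x m := by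
  apply List.ext_getElem <;> simp [seqRestrict, h, Nat.min_eq_left]

lemma seqRestrict_prefix (x : ℕ → ℕ) {m n : ℕ} (h : m ≤ n) :
    seqRestrict x m <+: seqRestrict x n := by
  rw [← seqRestrict_take x h]; exact List.take_prefix _ _

lemma prefix_seqRestrict {s : List ℕ} {x : ℕ → ℕ} {n : ℕ} (h : s <+: seqRestrict x n) :
    s = seqRestrict x s.length := by
  have hl : s.length ≤ n := by simpa using h.length_le
  have h2 := List.prefix_iff_eq_take.mp h
  rw [h2, seqRestrict_take x hl, seqRestrict_length]

lemma seqRestrict_eq_iff {x y : ℕ → ℕ} {n : ℕ} :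
    seqRestrict x n = seqRestrict y n ↔ ∀ k < n, x k = y k := by
  constructor
  · intro h k hk
    have h2 : (seqRestrict x n)[k]? = (seqRestrict y n)[k]? := by rw [h]
    simpa [seqRestrict, List.getElem?_ofFn, hk] using h2
  · intro h
    simp only [seqRestrict]
    congr 1; funext i; exact h i i.2

lemma branches_mono {T T' : Set (List ℕ)} (h : T ⊆ T') : branches T ⊆ branches T' :=
  fun _ hx n => h (hx n)

lemma isOpen_restrict (n : ℕ) (Q : List ℕ → Prop) :
    IsOpen {x : ℕ → ℕ | Q (seqRestrict x n)} := by
  have : {x : ℕ → ℕ | Q (seqRestrict x n)} =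
      ⋃ (v : Fin n → ℕ) (_ : Q (List.ofFn v)), ⋂ (k : Fin n), {x : ℕ → ℕ | x k = v k} := by
    ext x
    simp only [Set.mem_setOf_eq, Set.mem_iUnion, Set.mem_iInter]
    constructor
    · intro h
      exact ⟨fun i => x i, by simpa [seqRestrict] using h, fun k => rfl⟩
    · rintro ⟨v, hv, hx⟩
      have : seqRestrict x n = List.ofFn v := by
        simp only [seqRestrict]; congr 1; funext i; exact hx i
      rwa [this]
  rw [this]
  refine isOpen_iUnion fun v => isOpen_iUnion fun _ => isOpen_iInter_of_finite fun k => ?_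
  have hc : Continuous (fun x : ℕ → ℕ => x (k : ℕ)) := continuous_apply (A := fun _ : ℕ => ℕ) _
  have : {x : ℕ → ℕ | x k = v k} = (fun x : ℕ → ℕ => x (k : ℕ)) ⁻¹' ({v k} : Set ℕ) := rfl
  rw [this]
  exact hc.isOpen_preimage ({v k} : Set ℕ) (isOpen_discrete _)

lemma isClosed_branches (T : Set (List ℕ)) : IsClosed (branches T) := by
  have : branches T = ⋂ n, {x : ℕ → ℕ | seqRestrict x n ∈ T} := by
    ext x; simp [branches]
  rw [this]
  refine isClosed_iInter fun n => ?_
  have h1 : IsOpen {x : ℕ → ℕ | (fun l => l ∉ T) (seqRestrict x n)} :=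
    isOpen_restrict n (fun l => l ∉ T)
  have h2 : {x : ℕ → ℕ | seqRestrict x n ∈ T} =
      {x : ℕ → ℕ | (fun l => l ∉ T) (seqRestrict x n)}ᶜ := by ext x; simp
  rw [h2]; exact isClosed_compl_iff.mpr h1

/-! ### Tree basics -/

def clImage (i : List ℕ → List ℕ) (S : Set (List ℕ)) : Set (List ℕ) := {t | ∃ s ∈ S, t <+: i s}

def pull (i : List ℕ → List ℕ) (R : Set (List ℕ)) : Set (List ℕ) := {s | i s ∈ R}

variable {𝕋 : Set (Set (List ℕ))}

lemma branches_nonempty (hctf : CombTreeForcing 𝕋) {A : Set (List ℕ)} (hA : A ∈ 𝕋) :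
    (branches A).Nonempty := by
  obtain ⟨i, -, -, -, g, -, -, hrange, -⟩ := hctf.homogeneity A hA
  exact ⟨g (fun _ => 0), by rw [← hrange]; exact ⟨_, rfl⟩⟩

lemma pruned (hctf : CombTreeForcing 𝕋) {A : Set (List ℕ)} (hA : A ∈ 𝕋) {t : List ℕ}
    (ht : t ∈ A) : ∃ x ∈ branches A, seqRestrict x t.length = t := by
  have hres := hctf.restrict_mem A hA t ht
  obtain ⟨x, hx⟩ := branches_nonempty hctf hres
  refine ⟨x, fun n => (hx n).1, ?_⟩
  rcases (hx t.length).2 with h | h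
  · exact (h.eq_of_length (by simp)).symm
  · exact h.eq_of_length (by simp)


section Hom
set_option linter.unusedSectionVars false

variable (hctf : CombTreeForcing 𝕋) {A : Set (List ℕ)} (hA : A ∈ 𝕋)
  {i : List ℕ → List ℕ} {g : (ℕ → ℕ) → (ℕ → ℕ)}
  (hi_inj : Function.Injective i) (hi_mono : ∀ s t : List ℕ, s <+: t → i s <+: i t)
  (hi_mem : ∀ s : List ℕ, i s ∈ A)
  (hg : ∀ (x : ℕ → ℕ) (n : ℕ),
    i (seqRestrict x n) = seqRestrict (g x) (i (seqRestrict x n)).length)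
  (hemb : Topology.IsEmbedding g) (hrange : Set.range g = branches A)
  (hiff : ∀ S : Set (List ℕ), IsSeqTree S → (S ∈ 𝕋 ↔ {t | ∃ s ∈ S, t <+: i s} ∈ 𝕋))

include hi_inj hi_mono in
lemma len_le (x : ℕ → ℕ) (n : ℕ) : n ≤ (i (seqRestrict x n)).length := by
  induction n with
  | zero => exact Nat.zero_le _
  | succ n ih =>
      have hpre : i (seqRestrict x n) <+: i (seqRestrict x (n+1)) :=
        hi_mono _ _ (seqRestrict_prefix x (Nat.le_succ n))
      have hne : i (seqRestrict x n) ≠ i (seqRestrict x (n+1)) := by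
        intro h
        have := hi_inj h
        have := congrArg List.length this
        simp at this
      have hlt : (i (seqRestrict x n)).length < (i (seqRestrict x (n+1))).length := by
        rcases Nat.lt_or_ge (i (seqRestrict x n)).length (i (seqRestrict x (n+1))).length with h | h
        · exact h
        · exact absurd (hpre.eq_of_length (le_antisymm hpre.length_le h)) hne
      omega

include hi_inj hi_mono hg in
lemma gx_restrict_prefix (x : ℕ → ℕ) (m : ℕ) :
    seqRestrict (g x) m <+: i (seqRestrict x m) := by
  rw [hg x m]
  exact seqRestrict_prefix _ (len_le hi_inj hi_mono x m)

include hi_inj hi_mono hg in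
lemma gx_mem_clImage {S : Set (List ℕ)} {x : ℕ → ℕ} (hx : x ∈ branches S) :
    g x ∈ branches (clImage i S) :=
  fun m => ⟨seqRestrict x m, hx m, gx_restrict_prefix hi_inj hi_mono hg x m⟩

include hctf hA hi_inj hi_mono hi_mem hg hemb hrange in
/-- Main Lemma: the branches of the downward closure of `i '' T` are exactly `g '' [T]`. -/
lemma branches_clImage {T : Set (List ℕ)} (hT : T ∈ 𝕋) :
    branches (clImage i T) = g '' branches T := by
  apply Set.Subset.antisymm
  · intro y hy
    have hclosed : IsClosed (g '' branches T) := by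
      have : Topology.IsClosedEmbedding g :=
        ⟨hemb, by rw [hrange]; exact isClosed_branches A⟩
      exact this.isClosedMap _ (isClosed_branches T)
    -- for every m pick u_m ∈ T with y↾m <+: i u_m, and a branch x_m of T through u_m
    have key : ∀ m : ℕ, ∃ x ∈ branches T, ∀ k < m, g x k = y k := by
      intro m
      obtain ⟨u, hu, hpre⟩ := hy m
      obtain ⟨x, hxT, hxu⟩ := pruned hctf hT hu
      refine ⟨x, hxT, ?_⟩
      have h1 : i u = seqRestrict (g x) (i u).length := by
        have := hg x u.length
        rwa [hxu] at this
      have hml : m ≤ (i u).length := by simpa using hpre.length_le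
      have h2 : seqRestrict y m <+: seqRestrict (g x) (i u).length := h1 ▸ hpre
      have h3 : seqRestrict y m = seqRestrict (g x) m := by
        have := prefix_seqRestrict h2
        simpa using this
      intro k hk
      exact (seqRestrict_eq_iff.mp h3 k hk).symm
    choose xs hxs hagree using key
    have htend : Filter.Tendsto (fun m => g (xs m)) Filter.atTop (nhds y) := by
      rw [tendsto_pi_nhds]
      intro k
      have : ∀ m, k < m → g (xs m) k = y k := fun m hm => hagree m k hm
      rw [@nhds_discrete ℕ]
      rw [Filter.tendsto_pure]
      filter_upwards [Filter.eventually_gt_atTop k] with m hm using this m hm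
    exact hclosed.mem_of_tendsto htend
      (Filter.Eventually.of_forall fun m => ⟨xs m, hxs m, rfl⟩)
  · rintro _ ⟨x, hx, rfl⟩
    exact gx_mem_clImage hi_inj hi_mono hg hx

include hctf hA hi_inj hi_mono hi_mem hg hemb hrange in
/-- `A` is the downward closure of the full skeleton. -/
lemma clImage_univ : clImage i (Set.univ : Set (List ℕ)) = A := by
  apply Set.Subset.antisymm
  · rintro t ⟨s, -, hpre⟩
    exact (hctf.isTree A hA).2 (i s) (hi_mem s) t hpre
  · intro t ht
    obtain ⟨x', hx', hres⟩ := pruned hctf hA ht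
    have hx'r : x' ∈ Set.range g := by rw [hrange]; exact hx'
    obtain ⟨y, rfl⟩ := hx'r
    refine ⟨seqRestrict y t.length, trivial, ?_⟩
    have h5 := gx_restrict_prefix hi_inj hi_mono hg y t.length
    rwa [hres] at h5

lemma clImage_subset (hctf : CombTreeForcing 𝕋) (hA : A ∈ 𝕋) (hi_mem : ∀ s, i s ∈ A)
    (S : Set (List ℕ)) : clImage i S ⊆ A := by
  rintro t ⟨s, -, hpre⟩
  exact (hctf.isTree A hA).2 (i s) (hi_mem s) t hpre

lemma clImage_mono {S S' : Set (List ℕ)} (h : S ⊆ S') : clImage i S ⊆ clImage i S' := by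
  rintro t ⟨s, hs, hpre⟩; exact ⟨s, h hs, hpre⟩

include hctf hA hi_inj hi_mono hi_mem hg hemb hrange hiff in
/-- Pullback lemma. -/
lemma pullback {T R : Set (List ℕ)} (hT : T ∈ 𝕋) (hR : R ∈ 𝕋)
    (hRT : R ⊆ clImage i T) :
    pull i R ∈ 𝕋 ∧ pull i R ⊆ T ∧ branches (pull i R) = g ⁻¹' branches R ∧
      clImage i (pull i R) = R := by
  have hbr : branches R ⊆ g '' branches T := by
    rw [← branches_clImage hctf hA hi_inj hi_mono hi_mem hg hemb hrange hT]
    exact branches_mono hRT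
  -- branches of pull
  have hbp : branches (pull i R) = g ⁻¹' branches R := by
    ext x
    constructor
    · intro hx m
      rcases le_or_gt m (i (seqRestrict x m)).length with h | h
      · have h1 : seqRestrict (g x) m <+: i (seqRestrict x m) :=
          gx_restrict_prefix hi_inj hi_mono hg x m
        have h2 : i (seqRestrict x m) ∈ R := hx m
        exact (hctf.isTree R hR).2 _ h2 _ h1
      · exact absurd h (Nat.not_lt.mpr (len_le hi_inj hi_mono x m))
    · intro hx n
      show i (seqRestrict x n) ∈ R
      rw [hg x n]
      exact hx _
  -- clImage of pull is R
  have hcl : clImage i (pull i R) = R := by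
    apply Set.Subset.antisymm
    · rintro t ⟨s, hs, hpre⟩
      exact (hctf.isTree R hR).2 (i s) hs t hpre
    · intro t ht
      obtain ⟨x', hx', hres⟩ := pruned hctf hR ht
      obtain ⟨y, hyT, hgy⟩ := hbr hx'
      subst hgy
      have hyp : y ∈ branches (pull i R) := by rw [hbp]; exact hx'
      refine ⟨seqRestrict y t.length, hyp t.length, ?_⟩
      have h5 := gx_restrict_prefix hi_inj hi_mono hg y t.length
      rwa [hres] at h5
  have htree : IsSeqTree (pull i R) := by
    constructor
    · obtain ⟨t, ht⟩ := (hctf.isTree R hR).1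
      obtain ⟨x', hx', -⟩ := pruned hctf hR ht
      obtain ⟨y, hyT, hgy⟩ := hbr hx'
      refine ⟨seqRestrict y 0, ?_⟩
      show i (seqRestrict y 0) ∈ R
      rw [hg y 0, hgy]
      exact hx' _
    · intro s hs t hts
      exact (hctf.isTree R hR).2 (i s) hs (i t) (hi_mono _ _ hts)
  have hmem : pull i R ∈ 𝕋 := by
    rw [hiff (pull i R) htree]
    show clImage i (pull i R) ∈ 𝕋
    rw [hcl]; exact hR
  refine ⟨hmem, ?_, hbp, hcl⟩
  -- pull i R ⊆ T
  intro s hs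
  obtain ⟨x, hx, hres⟩ := pruned hctf hmem (t := s) hs
  have hgx : g x ∈ branches R := by rw [hbp] at hx; exact hx
  obtain ⟨y, hyT, hgy⟩ := hbr hgx
  have hxy : x = y := hemb.injective hgy.symm
  subst hxy
  rw [← hres]
  exact hyT s.length

end Hom

end CTF

namespace CTF

variable {𝕋 : Set (Set (List ℕ))}

def relT0 (𝕋 : Set (Set (List ℕ))) (A : Set (List ℕ)) (X : Set (ℕ → ℕ)) : Prop :=
  ∀ T ∈ 𝕋, T ⊆ A → ∃ S ∈ 𝕋, S ⊆ T ∧ X ∩ branches S = ∅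

lemma t0_mono {X Y : Set (ℕ → ℕ)} (hXY : X ⊆ Y) (hY : Y ∈ treeIdeal 𝕋) :
    X ∈ treeIdeal 𝕋 := by
  intro T hT
  obtain ⟨S, hS, hST, hdisj⟩ := hY T hT
  exact ⟨S, hS, hST, Set.eq_empty_of_subset_empty (hdisj ▸ Set.inter_subset_inter_left _ hXY)⟩

lemma t0_union {X Y : Set (ℕ → ℕ)} (hX : X ∈ treeIdeal 𝕋) (hY : Y ∈ treeIdeal 𝕋) :
    X ∪ Y ∈ treeIdeal 𝕋 := by
  intro T hT
  obtain ⟨S1, hS1, hS1T, hd1⟩ := hX T hT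
  obtain ⟨S2, hS2, hS2T, hd2⟩ := hY S1 hS1
  refine ⟨S2, hS2, hS2T.trans hS1T, ?_⟩
  rw [Set.union_inter_distrib_right]
  rw [Set.union_empty_iff]
  constructor
  · exact Set.eq_empty_of_subset_empty (hd1 ▸ Set.inter_subset_inter_right _ (branches_mono hS2T))
  · exact hd2

lemma empty_mem_t0 : (∅ : Set (ℕ → ℕ)) ∈ treeIdeal 𝕋 := fun T hT =>
  ⟨T, hT, subset_rfl, by simp⟩

lemma relT0_mono {A : Set (List ℕ)} {X X' : Set (ℕ → ℕ)} (h : X ⊆ X')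
    (hX' : relT0 𝕋 A X') : relT0 𝕋 A X := by
  intro T hT hTA
  obtain ⟨S, hS, hST, hd⟩ := hX' T hT hTA
  exact ⟨S, hS, hST, Set.eq_empty_of_subset_empty (hd ▸ Set.inter_subset_inter_left _ h)⟩

lemma t0_relT0 {A : Set (List ℕ)} {X : Set (ℕ → ℕ)} (hX : X ∈ treeIdeal 𝕋) :
    relT0 𝕋 A X := fun T hT _ => hX T hT

/-- Any set of size `< 𝔠` is in the tree ideal. -/
lemma small_mem_t0 (hctf : CombTreeForcing 𝕋) {P : Set (ℕ → ℕ)}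
    (hP : Cardinal.mk P < Cardinal.continuum) : P ∈ treeIdeal 𝕋 := by
  intro T hT
  obtain ⟨i, hi_inj, hi_mono, hi_mem, g, hg, hemb, hrange, hiff⟩ := hctf.homogeneity T hT
  obtain ⟨f, -, hf⟩ := hctf.large_disjoint
  choose Tf hTf hfib using hf
  have hDmem : ∀ x : ℕ → Bool, clImage i (Tf x) ∈ 𝕋 := fun x =>
    (hiff (Tf x) (hctf.isTree _ (hTf x))).mp (hTf x)
  have hDbr : ∀ x : ℕ → Bool, branches (clImage i (Tf x)) = g '' branches (Tf x) := fun x =>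
    branches_clImage hctf hT hi_inj hi_mono hi_mem hg hemb hrange (hTf x)
  have hdisj : ∀ x x' : ℕ → Bool, x ≠ x' →
      branches (clImage i (Tf x)) ∩ branches (clImage i (Tf x')) = ∅ := by
    intro x x' hne
    rw [hDbr, hDbr]
    apply Set.eq_empty_iff_forall_notMem.mpr
    rintro z ⟨⟨a, ha, rfl⟩, ⟨b, hb, hab⟩⟩
    have : a = b := hemb.injective hab.symm
    subst this
    rw [← hfib x] at ha
    rw [← hfib x'] at hb
    exact hne (ha.symm.trans hb)
  by_contra hcon
  push_neg at hcon
  have hbad : ∀ x : ℕ → Bool, (P ∩ branches (clImage i (Tf x))).Nonempty := by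
    intro x
    have h1 := hcon (clImage i (Tf x)) (hDmem x)
      (clImage_subset hctf hT hi_mem (Tf x))
    exact h1
  choose p hp using hbad
  have hinj : Function.Injective fun x : ℕ → Bool => (⟨p x, (hp x).1⟩ : P) := by
    intro x x' h
    by_contra hne
    have h1 := (hp x).2
    have h2 : p x ∈ branches (clImage i (Tf x')) := by
      have : p x = p x' := congrArg Subtype.val h
      rw [this]; exact (hp x').2
    have := hdisj x x' hne
    rw [Set.eq_empty_iff_forall_notMem] at this
    exact this (p x) ⟨h1, h2⟩
  have hcard : Cardinal.continuum ≤ Cardinal.mk P := by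
    have h1 : Cardinal.mk (ℕ → Bool) ≤ Cardinal.mk P := Cardinal.mk_le_of_injective hinj
    have h2 : Cardinal.mk (ℕ → Bool) = Cardinal.continuum := by
      rw [← Cardinal.power_def Bool ℕ, Cardinal.mk_bool, Cardinal.mk_nat,
        Cardinal.two_power_aleph0]
    rwa [h2] at h1
  exact absurd hP (not_lt.mpr hcard)

section HomT0

variable (hctf : CombTreeForcing 𝕋) {A : Set (List ℕ)} (hA : A ∈ 𝕋)
  {i : List ℕ → List ℕ} {g : (ℕ → ℕ) → (ℕ → ℕ)}
  (hi_inj : Function.Injective i) (hi_mono : ∀ s t : List ℕ, s <+: t → i s <+: i t)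
  (hi_mem : ∀ s : List ℕ, i s ∈ A)
  (hg : ∀ (x : ℕ → ℕ) (n : ℕ),
    i (seqRestrict x n) = seqRestrict (g x) (i (seqRestrict x n)).length)
  (hemb : Topology.IsEmbedding g) (hrange : Set.range g = branches A)
  (hiff : ∀ S : Set (List ℕ), IsSeqTree S → (S ∈ 𝕋 ↔ {t | ∃ s ∈ S, t <+: i s} ∈ 𝕋))

set_option linter.unusedSectionVars false

include hctf hA hi_inj hi_mono hi_mem hg hemb hrange hiff in
lemma preimage_t0 {Y : Set (ℕ → ℕ)} (hY : Y ∈ treeIdeal 𝕋) : g ⁻¹' Y ∈ treeIdeal 𝕋 := by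
  intro T hT
  have hDT : clImage i T ∈ 𝕋 := (hiff T (hctf.isTree T hT)).mp hT
  obtain ⟨R, hR, hRD, hYR⟩ := hY (clImage i T) hDT
  obtain ⟨hSmem, hST, hSbr, -⟩ :=
    pullback hctf hA hi_inj hi_mono hi_mem hg hemb hrange hiff hT hR hRD
  refine ⟨pull i R, hSmem, hST, ?_⟩
  rw [hSbr, ← Set.preimage_inter, hYR]
  simp

include hctf hA hi_inj hi_mono hi_mem hg hemb hrange hiff in
lemma image_relT0 {Z : Set (ℕ → ℕ)} (hZ : Z ∈ treeIdeal 𝕋) : relT0 𝕋 A (g '' Z) := by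
  intro T' hT' hT'A
  have hT'cl : T' ⊆ clImage i Set.univ := by
    rw [clImage_univ hctf hA hi_inj hi_mono hi_mem hg hemb hrange]
    exact hT'A
  obtain ⟨hSmem, -, hSbr, hScl⟩ :=
    pullback hctf hA hi_inj hi_mono hi_mem hg hemb hrange hiff hctf.univ_mem hT' hT'cl
  obtain ⟨S', hS', hS'sub, hZS'⟩ := hZ (pull i T') hSmem
  have hD' : clImage i S' ∈ 𝕋 := (hiff S' (hctf.isTree S' hS')).mp hS'
  refine ⟨clImage i S', hD', ?_, ?_⟩
  · rw [← hScl]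
    exact clImage_mono hS'sub
  · rw [branches_clImage hctf hA hi_inj hi_mono hi_mem hg hemb hrange hS',
      ← Set.image_inter hemb.injective, hZS']
    simp

end HomT0

/-- The key escaping lemma. -/
lemma escape (hctf : CombTreeForcing 𝕋) {A : Set (List ℕ)} (hA : A ∈ 𝕋)
    {K : Set (Set (ℕ → ℕ))} (hK : K ⊆ treeIdeal 𝕋)
    (hKcard : Cardinal.mk K < idealCof (treeIdeal 𝕋))
    {P : Set (ℕ → ℕ)} (hP : Cardinal.mk P < Cardinal.continuum) :
    ∃ X : Set (ℕ → ℕ), X ⊆ branches A ∧ X ∩ P = ∅ ∧ relT0 𝕋 A X ∧ ∀ Y ∈ K, ¬ X ⊆ Y := by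
  obtain ⟨i, hi_inj, hi_mono, hi_mem, g, hg, hemb, hrange, hiff⟩ := hctf.homogeneity A hA
  by_contra hcon
  push_neg at hcon
  set J : Set (Set (ℕ → ℕ)) := (fun Y => g ⁻¹' (Y ∪ P)) '' K with hJ
  have hJt0 : J ⊆ treeIdeal 𝕋 := by
    rintro _ ⟨Y, hY, rfl⟩
    show g ⁻¹' (Y ∪ P) ∈ treeIdeal 𝕋
    rw [Set.preimage_union]
    apply t0_union
    · exact preimage_t0 hctf hA hi_inj hi_mono hi_mem hg hemb hrange hiff (hK hY)
    · apply small_mem_t0 hctf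
      exact lt_of_le_of_lt (Cardinal.mk_preimage_of_injective g P hemb.injective) hP
  have hJcof : ∀ Z ∈ treeIdeal 𝕋, ∃ W ∈ J, Z ⊆ W := by
    intro Z hZ
    have hX0 : (g '' Z) \ P ⊆ branches A := by
      intro z hz
      have : z ∈ g '' Z := hz.1
      rw [← hrange]
      obtain ⟨w, -, rfl⟩ := this
      exact ⟨w, rfl⟩
    have hX0P : ((g '' Z) \ P) ∩ P = ∅ := by
      ext z; simp only [Set.mem_inter_iff, Set.mem_diff, Set.mem_empty_iff_false, iff_false]
      rintro ⟨⟨-, h⟩, h'⟩; exact h h'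
    have hX0rel : relT0 𝕋 A ((g '' Z) \ P) :=
      relT0_mono Set.diff_subset
        (image_relT0 hctf hA hi_inj hi_mono hi_mem hg hemb hrange hiff hZ)
    obtain ⟨Y, hY, hXY⟩ := hcon _ hX0 hX0P hX0rel
    refine ⟨g ⁻¹' (Y ∪ P), ⟨Y, hY, rfl⟩, ?_⟩
    intro z hz
    show g z ∈ Y ∪ P
    by_cases hgz : g z ∈ P
    · exact Or.inr hgz
    · exact Or.inl (hXY ⟨⟨z, hz, rfl⟩, hgz⟩)
  have hmem : Cardinal.mk J ∈
      {c : Cardinal | ∃ J' ⊆ treeIdeal 𝕋, Cardinal.mk J' = c ∧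
        ∀ X ∈ treeIdeal 𝕋, ∃ Y ∈ J', X ⊆ Y} := ⟨J, hJt0, rfl, hJcof⟩
  have h1 : idealCof (treeIdeal 𝕋) ≤ Cardinal.mk J := csInf_le' hmem
  have h2 : Cardinal.mk J ≤ Cardinal.mk K := Cardinal.mk_image_le
  exact absurd hKcard (not_lt.mpr (h1.trans h2))

end CTF

namespace CTF

/-- The index type of the recursion: a well-order of type `𝔠`. -/
abbrev kT : Type := Cardinal.continuum.ord.ToType

lemma mk_kT : Cardinal.mk kT = Cardinal.continuum := by
  rw [Cardinal.mk_toType, Cardinal.card_ord]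

lemma mk_Iio_kT (δ : kT) : Cardinal.mk (Set.Iio δ) < Cardinal.continuum :=
  Cardinal.mk_Iio_ord_toType δ

/-- Data chosen at each step of the recursion. -/
structure StepData (ι : Type) where
  a : ι
  X : Set (ℕ → ℕ)
  R : Set (List ℕ)
  b : Option ι

instance {ι : Type} [Nonempty ι] : Nonempty (StepData ι) :=
  (inferInstance : Nonempty ι).map fun a => ⟨a, ∅, ∅, none⟩

def optSet {ι : Type} : Option ι → Set ι
  | none => ∅
  | some b => {b}

lemma optSet_subsingleton {ι : Type} (o : Option ι) : (optSet o).Subsingleton := by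
  cases o with
  | none => exact Set.subsingleton_empty
  | some b => exact Set.subsingleton_singleton

section Rec

variable {ι : Type} (Tfam : ι → Set (List ℕ)) (𝕋 : Set (Set (List ℕ)))
  (eT : kT → Set (List ℕ)) (Dfam : kT → Set (Set (ℕ → ℕ)))

def used (H : kT → StepData ι) (δ : kT) : Set ι :=
  ((fun β => (H β).a) '' Set.Iio δ) ∪ ⋃ β ∈ Set.Iio δ, optSet (H β).b

def preP (H : kT → StepData ι) (δ : kT) (a : ι) : Set (ℕ → ℕ) :=
  ⋃ β ∈ Set.Iio δ, (branches (H β).R ∩ branches (Tfam a))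

def XC (H : kT → StepData ι) (δ : kT) : Set (ℕ → ℕ) :=
  ⋃ β ∈ Set.Iio δ, (H β).X

def Good (H : kT → StepData ι) (δ : kT) (d : StepData ι) : Prop :=
  d.a ∉ used H δ ∧
  d.X ⊆ branches (Tfam d.a) ∧
  d.X ∩ preP Tfam H δ d.a = ∅ ∧
  relT0 𝕋 (Tfam d.a) d.X ∧
  (∀ Y ∈ Dfam δ, ¬ d.X ⊆ Y) ∧
  d.R ∈ 𝕋 ∧
  d.R ⊆ eT δ ∧
  (XC H δ ∪ d.X) ∩ branches d.R = ∅ ∧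
  ((∃ b, d.b = some b ∧ d.R ⊆ Tfam b) ∨
    (d.b = none ∧ ∀ a' : ι, (branches d.R ∩ branches (Tfam a')).Subsingleton))

lemma used_congr {H H' : kT → StepData ι} {δ : kT} (h : ∀ β < δ, H β = H' β) :
    used H δ = used H' δ := by
  unfold used
  congr 1
  · exact Set.image_congr fun β hβ => by rw [h β hβ]
  · exact Set.iUnion₂_congr fun β hβ => by rw [h β hβ]

lemma preP_congr {H H' : kT → StepData ι} {δ : kT} (h : ∀ β < δ, H β = H' β) (a : ι) :
    preP Tfam H δ a = preP Tfam H' δ a :=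
  Set.iUnion₂_congr fun β hβ => by rw [h β hβ]

lemma XC_congr {H H' : kT → StepData ι} {δ : kT} (h : ∀ β < δ, H β = H' β) :
    XC H δ = XC H' δ :=
  Set.iUnion₂_congr fun β hβ => by rw [h β hβ]

lemma Good_congr {H H' : kT → StepData ι} {δ : kT} (h : ∀ β < δ, H β = H' β) (d : StepData ι) :
    Good Tfam 𝕋 eT Dfam H δ d ↔ Good Tfam 𝕋 eT Dfam H' δ d := by
  unfold Good
  rw [used_congr h, preP_congr Tfam h, XC_congr h]

variable [Nonempty ι]

noncomputable def FRec : kT → StepData ι :=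
  (IsWellFounded.wf (r := ((· < ·) : kT → kT → Prop))).fix fun δ IH =>
    Classical.epsilon fun d =>
      Good Tfam 𝕋 eT Dfam (fun β => if h : β < δ then IH β h else Classical.ofNonempty) δ d

lemma FRec_good {δ : kT} (hex : ∃ d, Good Tfam 𝕋 eT Dfam (FRec Tfam 𝕋 eT Dfam) δ d) :
    Good Tfam 𝕋 eT Dfam (FRec Tfam 𝕋 eT Dfam) δ (FRec Tfam 𝕋 eT Dfam δ) := by
  set H' : kT → StepData ι :=
    fun β => if h : β < δ then FRec Tfam 𝕋 eT Dfam β else Classical.ofNonempty with hH'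
  have hagree : ∀ β < δ, H' β = FRec Tfam 𝕋 eT Dfam β := fun β hβ => by
    simp [hH', hβ]
  have heq : FRec Tfam 𝕋 eT Dfam δ =
      Classical.epsilon fun d => Good Tfam 𝕋 eT Dfam H' δ d :=
    WellFounded.fix_eq _ _ _
  have hex' : ∃ d, Good Tfam 𝕋 eT Dfam H' δ d := by
    obtain ⟨d, hd⟩ := hex
    exact ⟨d, (Good_congr Tfam 𝕋 eT Dfam hagree d).mpr hd⟩
  have := Classical.epsilon_spec hex'
  rw [← heq] at this
  exact (Good_congr Tfam 𝕋 eT Dfam hagree _).mp this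

end Rec

end CTF

namespace CTF

lemma mk_biUnion_le_of_subsingleton {α β : Type} (s : Set α) (A : α → Set β)
    (h : ∀ a ∈ s, (A a).Subsingleton) :
    Cardinal.mk (⋃ a ∈ s, A a) ≤ Cardinal.mk s := by
  have hmem : ∀ x : ↥(⋃ a ∈ s, A a), ∃ a, a ∈ s ∧ (x : β) ∈ A a := by
    intro x
    have h2 := Set.mem_iUnion₂.mp x.2
    obtain ⟨a, ha, hx⟩ := h2
    exact ⟨a, ha, hx⟩
  choose fa hfa hmemA using hmem
  have hinj : Function.Injective fun x : ↥(⋃ a ∈ s, A a) => (⟨fa x, hfa x⟩ : s) := by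
    intro x y hxy
    have h1 : fa x = fa y := congrArg Subtype.val hxy
    have h2 : (x : β) ∈ A (fa x) := hmemA x
    have h3 : (y : β) ∈ A (fa x) := h1 ▸ hmemA y
    exact Subtype.ext (h (fa x) (hfa x) h2 h3)
  exact Cardinal.mk_le_of_injective hinj

section MainRec

variable {𝕋 : Set (Set (List ℕ))} (hctf : CombTreeForcing 𝕋)
  {ι : Type} [Nonempty ι] {Tfam : ι → Set (List ℕ)}
  (hι : Cardinal.mk ι = Cardinal.continuum)
  (hTmem : ∀ a : ι, Tfam a ∈ 𝕋)
  (hTdisj : ∀ a b : ι, a ≠ b → branches (Tfam a) ∩ branches (Tfam b) = ∅)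
  (hsel : ∀ T ∈ 𝕋, ∃ S ∈ 𝕋, S ⊆ T ∧
    ((∃ a : ι, S ⊆ Tfam a) ∨ ∀ a : ι, (branches S ∩ branches (Tfam a)).Subsingleton))
  {eT : kT → Set (List ℕ)} (heT : ∀ δ, eT δ ∈ 𝕋)
  {Dfam : kT → Set (Set (ℕ → ℕ))} (hDsub : ∀ δ, Dfam δ ⊆ treeIdeal 𝕋)
  (hDcard : ∀ δ, Cardinal.mk (Dfam δ) < idealCof (treeIdeal 𝕋))

set_option linter.unusedSectionVars false

include hctf hι hTmem hTdisj hsel heT hDsub hDcard in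
lemma exists_good_step (δ : kT)
    (IH : ∀ β, β < δ →
      Good Tfam 𝕋 eT Dfam (FRec Tfam 𝕋 eT Dfam) β (FRec Tfam 𝕋 eT Dfam β)) :
    ∃ d, Good Tfam 𝕋 eT Dfam (FRec Tfam 𝕋 eT Dfam) δ d := by
  set F : kT → StepData ι := FRec Tfam 𝕋 eT Dfam with hF
  -- a fresh index
  have husedcard : Cardinal.mk (used F δ) < Cardinal.continuum := by
    have h1 : Cardinal.mk (used F δ) ≤
        Cardinal.mk ((fun β => (F β).a) '' Set.Iio δ) +
          Cardinal.mk (⋃ β ∈ Set.Iio δ, optSet (F β).b) := Cardinal.mk_union_le _ _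
    have h2 : Cardinal.mk ((fun β => (F β).a) '' Set.Iio δ) < Cardinal.continuum :=
      lt_of_le_of_lt Cardinal.mk_image_le (mk_Iio_kT δ)
    have h3 : Cardinal.mk (⋃ β ∈ Set.Iio δ, optSet (F β).b) < Cardinal.continuum :=
      lt_of_le_of_lt
        (mk_biUnion_le_of_subsingleton _ _ (fun β _ => optSet_subsingleton _))
        (mk_Iio_kT δ)
    exact lt_of_le_of_lt h1 (Cardinal.add_lt_of_lt Cardinal.aleph0_le_continuum h2 h3)
  have hfresh : ∃ a : ι, a ∉ used F δ := by
    by_contra hcon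
    push_neg at hcon
    have : used F δ = Set.univ := Set.eq_univ_of_forall hcon
    rw [this, Cardinal.mk_univ, hι] at husedcard
    exact absurd husedcard (lt_irrefl _)
  obtain ⟨a, ha⟩ := hfresh
  -- the reserved part of Tfam a is small
  have hPsub : ∀ β ∈ Set.Iio δ, (branches (F β).R ∩ branches (Tfam a)).Subsingleton := by
    intro β hβ
    obtain ⟨-, -, -, -, -, -, -, -, htype⟩ := IH β hβ
    rcases htype with ⟨b, hbeq, hRb⟩ | ⟨-, hss⟩
    · have hbu : b ∈ used F δ := by
        refine Or.inr (Set.mem_biUnion hβ ?_)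
        rw [hbeq]
        exact Set.mem_singleton b
      have hba : b ≠ a := fun h => ha (h ▸ hbu)
      have : branches (F β).R ∩ branches (Tfam a) ⊆
          branches (Tfam b) ∩ branches (Tfam a) :=
        Set.inter_subset_inter_left _ (branches_mono hRb)
      rw [hTdisj b a hba] at this
      exact Set.subsingleton_empty.anti this
    · exact hss a
  have hPcard : Cardinal.mk (preP Tfam F δ a) < Cardinal.continuum :=
    lt_of_le_of_lt (mk_biUnion_le_of_subsingleton _ _ hPsub) (mk_Iio_kT δ)
  -- escape
  obtain ⟨X, hXsub, hXP, hXrel, hXesc⟩ :=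
    escape hctf (hTmem a) (hDsub δ) (hDcard δ) hPcard
  -- distinctness of earlier a's from a
  have haβ : ∀ β, β < δ → (F β).a ≠ a := by
    intro β hβ h
    exact ha (h ▸ Or.inl ⟨β, hβ, rfl⟩)
  have haβinj : ∀ β β', β < δ → β' < δ → (F β).a = (F β').a → β = β' := by
    intro β β' hβ hβ' h
    rcases lt_trichotomy β β' with hlt | heq | hgt
    · obtain ⟨hfr, -⟩ := IH β' hβ'
      exact absurd (h ▸ Or.inl ⟨β, hlt, rfl⟩ : (F β').a ∈ used F β') hfr
    · exact heq
    · obtain ⟨hfr, -⟩ := IH β hβ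
      exact absurd (h ▸ Or.inl ⟨β', hgt, rfl⟩ : (F β).a ∈ used F β) hfr
  -- choose R
  obtain ⟨S', hS', hS'T, hcase⟩ := hsel (eT δ) (heT δ)
  have hXβ : ∀ β, β < δ → (F β).X ⊆ branches (Tfam (F β).a) := by
    intro β hβ
    obtain ⟨-, h2, -⟩ := IH β hβ
    exact h2
  have hbuild : ∃ R, R ∈ 𝕋 ∧ R ⊆ S' ∧ (XC F δ ∪ X) ∩ branches R = ∅ ∧
      ((∃ b, R ⊆ Tfam b) ∨ ∀ a' : ι, (branches R ∩ branches (Tfam a')).Subsingleton) := by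
    rcases hcase with ⟨b, hS'b⟩ | hss
    · -- case 1 : S' is below Tfam b
      by_cases hba : b = a
      · subst hba
        obtain ⟨R, hR, hRS', hXR⟩ := hXrel S' hS' hS'b
        refine ⟨R, hR, hRS', ?_, Or.inl ⟨b, hRS'.trans hS'b⟩⟩
        apply Set.eq_empty_iff_forall_notMem.mpr
        rintro x ⟨hx, hxR⟩
        rcases hx with hx | hx
        · obtain ⟨β, hmem⟩ := Set.mem_iUnion.mp hx
          obtain ⟨hβ, hxβ⟩ := Set.mem_iUnion.mp hmem
          have h1 : x ∈ branches (Tfam (F β).a) := hXβ β hβ hxβ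
          have h2 : x ∈ branches (Tfam b) := branches_mono (hRS'.trans hS'b) hxR
          have := hTdisj (F β).a b (haβ β hβ)
          exact absurd ⟨h1, h2⟩ (Set.eq_empty_iff_forall_notMem.mp this x)
        · exact absurd ⟨hx, hxR⟩ (Set.eq_empty_iff_forall_notMem.mp hXR x)
      · by_cases hprev : ∃ β, β < δ ∧ (F β).a = b
        · obtain ⟨β₀, hβ₀, hab₀⟩ := hprev
          obtain ⟨-, -, -, hrel₀, -⟩ := IH β₀ hβ₀
          rw [hab₀] at hrel₀
          obtain ⟨R, hR, hRS', hX0R⟩ := hrel₀ S' hS' hS'b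
          refine ⟨R, hR, hRS', ?_, Or.inl ⟨b, hRS'.trans hS'b⟩⟩
          apply Set.eq_empty_iff_forall_notMem.mpr
          rintro x ⟨hx, hxR⟩
          have hxb : x ∈ branches (Tfam b) := branches_mono (hRS'.trans hS'b) hxR
          rcases hx with hx | hx
          · obtain ⟨β, hmem⟩ := Set.mem_iUnion.mp hx
            obtain ⟨hβ, hxβ⟩ := Set.mem_iUnion.mp hmem
            by_cases hai : (F β).a = b
            · have : β = β₀ := haβinj β β₀ hβ hβ₀ (hai.trans hab₀.symm)
              subst this
              exact absurd ⟨hxβ, hxR⟩ (Set.eq_empty_iff_forall_notMem.mp hX0R x)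
            · have h1 : x ∈ branches (Tfam (F β).a) := hXβ β hβ hxβ
              have := hTdisj (F β).a b hai
              exact absurd ⟨h1, hxb⟩ (Set.eq_empty_iff_forall_notMem.mp this x)
          · have h1 : x ∈ branches (Tfam a) := hXsub hx
            have := hTdisj a b (fun h => hba h.symm)
            exact absurd ⟨h1, hxb⟩ (Set.eq_empty_iff_forall_notMem.mp this x)
        · refine ⟨S', hS', subset_rfl, ?_, Or.inl ⟨b, hS'b⟩⟩
          apply Set.eq_empty_iff_forall_notMem.mpr
          rintro x ⟨hx, hxR⟩
          have hxb : x ∈ branches (Tfam b) := branches_mono hS'b hxR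
          rcases hx with hx | hx
          · obtain ⟨β, hmem⟩ := Set.mem_iUnion.mp hx
            obtain ⟨hβ, hxβ⟩ := Set.mem_iUnion.mp hmem
            have hai : (F β).a ≠ b := fun h => hprev ⟨β, hβ, h⟩
            have h1 : x ∈ branches (Tfam (F β).a) := hXβ β hβ hxβ
            have := hTdisj (F β).a b hai
            exact absurd ⟨h1, hxb⟩ (Set.eq_empty_iff_forall_notMem.mp this x)
          · have h1 : x ∈ branches (Tfam a) := hXsub hx
            have := hTdisj a b (fun h => hba h.symm)
            exact absurd ⟨h1, hxb⟩ (Set.eq_empty_iff_forall_notMem.mp this x)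
    · -- case 2 : S' meets every Tfam a' in at most one branch
      set Q : Set (ℕ → ℕ) := (XC F δ ∪ X) ∩ branches S' with hQ
      have hQcard : Cardinal.mk Q < Cardinal.continuum := by
        have hsubQ : Q ⊆ (⋃ β ∈ Set.Iio δ, ((F β).X ∩ branches S')) ∪
            (X ∩ branches S') := by
          rintro x ⟨hx, hxS⟩
          rcases hx with hx | hx
          · obtain ⟨β, hmem⟩ := Set.mem_iUnion.mp hx
            obtain ⟨hβ, hxβ⟩ := Set.mem_iUnion.mp hmem
            exact Or.inl (Set.mem_biUnion hβ ⟨hxβ, hxS⟩)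
          · exact Or.inr ⟨hx, hxS⟩
        have h1 : Cardinal.mk (⋃ β ∈ Set.Iio δ, ((F β).X ∩ branches S')) <
            Cardinal.continuum := by
          refine lt_of_le_of_lt
            (mk_biUnion_le_of_subsingleton _ _ (fun β hβ => ?_)) (mk_Iio_kT δ)
          have h2 : (F β).X ∩ branches S' ⊆
              branches S' ∩ branches (Tfam (F β).a) := by
            rintro x ⟨hx1, hx2⟩
            exact ⟨hx2, hXβ β hβ hx1⟩
          exact (hss (F β).a).anti h2
        have h2 : Cardinal.mk (X ∩ branches S' : Set (ℕ → ℕ)) < Cardinal.continuum := by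
          have h3 : X ∩ branches S' ⊆ branches S' ∩ branches (Tfam a) := by
            rintro x ⟨hx1, hx2⟩
            exact ⟨hx2, hXsub hx1⟩
          have h4 : (X ∩ branches S' : Set (ℕ → ℕ)).Subsingleton := (hss a).anti h3
          calc Cardinal.mk (X ∩ branches S' : Set (ℕ → ℕ)) ≤ 1 :=
                Cardinal.mk_le_one_iff_set_subsingleton.mpr h4
            _ < Cardinal.continuum := lt_of_lt_of_le Cardinal.one_lt_aleph0
                Cardinal.aleph0_le_continuum
        exact lt_of_le_of_lt (Cardinal.mk_le_mk_of_subset hsubQ)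
          (lt_of_le_of_lt (Cardinal.mk_union_le _ _)
            (Cardinal.add_lt_of_lt Cardinal.aleph0_le_continuum h1 h2))
      have hQt0 : Q ∈ treeIdeal 𝕋 := small_mem_t0 hctf hQcard
      obtain ⟨R, hR, hRS', hQR⟩ := hQt0 S' hS'
      refine ⟨R, hR, hRS', ?_, Or.inr fun a' => (hss a').anti
        (Set.inter_subset_inter_left _ (branches_mono hRS'))⟩
      apply Set.eq_empty_iff_forall_notMem.mpr
      rintro x ⟨hx, hxR⟩
      have hxQ : x ∈ Q := ⟨hx, branches_mono hRS' hxR⟩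
      exact absurd ⟨hxQ, hxR⟩ (Set.eq_empty_iff_forall_notMem.mp hQR x)
  obtain ⟨R, hR, hRS', hRdisj, hRtype⟩ := hbuild
  rcases hRtype with ⟨b, hRb⟩ | hss'
  · exact ⟨⟨a, X, R, some b⟩, ha, hXsub, hXP, hXrel, hXesc, hR, hRS'.trans hS'T, hRdisj,
      Or.inl ⟨b, rfl, hRb⟩⟩
  · exact ⟨⟨a, X, R, none⟩, ha, hXsub, hXP, hXrel, hXesc, hR, hRS'.trans hS'T, hRdisj,
      Or.inr ⟨rfl, hss'⟩⟩

include hctf hι hTmem hTdisj hsel heT hDsub hDcard in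
lemma good_all : ∀ δ : kT,
    Good Tfam 𝕋 eT Dfam (FRec Tfam 𝕋 eT Dfam) δ (FRec Tfam 𝕋 eT Dfam δ) := by
  intro δ
  induction δ using (IsWellFounded.wf (r := ((· < ·) : kT → kT → Prop))).induction with
  | _ δ IH =>
    exact FRec_good Tfam 𝕋 eT Dfam
      (exists_good_step hctf hι hTmem hTdisj hsel heT hDsub hDcard δ IH)

include hctf hι hTmem hTdisj hsel heT hDsub hDcard in
lemma main_contra {J0 : Set (Set (ℕ → ℕ))} (hJ0sub : J0 ⊆ treeIdeal 𝕋)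
    (hJ0cof : ∀ X ∈ treeIdeal 𝕋, ∃ Y ∈ J0, X ⊆ Y)
    (hDcov : ∀ Y ∈ J0, ∃ δ : kT, Y ∈ Dfam δ)
    (heTsurj : ∀ T ∈ 𝕋, ∃ δ : kT, eT δ = T) : False := by
  set F : kT → StepData ι := FRec Tfam 𝕋 eT Dfam with hF
  have hg : ∀ δ : kT, Good Tfam 𝕋 eT Dfam F δ (F δ) :=
    good_all hctf hι hTmem hTdisj hsel heT hDsub hDcard
  set Xs : Set (ℕ → ℕ) := ⋃ δ : kT, (F δ).X with hXs
  have hXst0 : Xs ∈ treeIdeal 𝕋 := by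
    intro T hT
    obtain ⟨δ, hδT⟩ := heTsurj T hT
    obtain ⟨-, -, -, -, -, hRmem, hRsub, hRdisj, -⟩ := hg δ
    refine ⟨(F δ).R, hRmem, hδT ▸ hRsub, ?_⟩
    apply Set.eq_empty_iff_forall_notMem.mpr
    rintro x ⟨hx, hxR⟩
    obtain ⟨β, hxβ⟩ := Set.mem_iUnion.mp hx
    rcases lt_trichotomy β δ with hlt | heq | hgt
    · have : x ∈ XC F δ ∪ (F δ).X := Or.inl (Set.mem_biUnion hlt hxβ)
      exact absurd ⟨this, hxR⟩ (Set.eq_empty_iff_forall_notMem.mp hRdisj x)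
    · subst heq
      exact absurd ⟨Or.inr hxβ, hxR⟩ (Set.eq_empty_iff_forall_notMem.mp hRdisj x)
    · obtain ⟨hfrβ, hXsubβ, hXPβ, -⟩ := hg β
      obtain ⟨-, -, -, -, -, -, -, -, htypeδ⟩ := hg δ
      rcases htypeδ with ⟨b, hbeq, hRb⟩ | ⟨-, hssδ⟩
      · have hbu : b ∈ used F β := by
          refine Or.inr (Set.mem_biUnion hgt ?_)
          rw [hbeq]
          exact Set.mem_singleton b
        have hba : (F β).a ≠ b := fun h => hfrβ (h ▸ hbu)
        have h1 : x ∈ branches (Tfam (F β).a) := hXsubβ hxβ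
        have h2 : x ∈ branches (Tfam b) := branches_mono hRb hxR
        exact absurd ⟨h1, h2⟩
          (Set.eq_empty_iff_forall_notMem.mp (hTdisj (F β).a b hba) x)
      · have hxP : x ∈ preP Tfam F β (F β).a :=
          Set.mem_biUnion hgt ⟨hxR, hXsubβ hxβ⟩
        exact absurd ⟨hxβ, hxP⟩ (Set.eq_empty_iff_forall_notMem.mp hXPβ x)
  obtain ⟨Y, hY, hXsY⟩ := hJ0cof Xs hXst0
  obtain ⟨δ, hYD⟩ := hDcov Y hY
  obtain ⟨-, -, -, -, hXesc, -⟩ := hg δ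
  exact hXesc Y hYD ((Set.subset_iUnion (fun δ : kT => (F δ).X) δ).trans hXsY)

end MainRec

end CTF

namespace CTF

variable {𝕋 : Set (Set (List ℕ))}

lemma one_lt_idealCof (hctf : CombTreeForcing 𝕋) {J0 : Set (Set (ℕ → ℕ))}
    (hJ0sub : J0 ⊆ treeIdeal 𝕋) (hJ0card : Cardinal.mk J0 = idealCof (treeIdeal 𝕋))
    (hJ0cof : ∀ X ∈ treeIdeal 𝕋, ∃ Y ∈ J0, X ⊆ Y) :
    1 < idealCof (treeIdeal 𝕋) := by
  by_contra h
  push_neg at h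
  rw [← hJ0card] at h
  have hss : (J0 : Set (Set (ℕ → ℕ))).Subsingleton :=
    Cardinal.mk_le_one_iff_set_subsingleton.mp h
  have hsingle : ∀ x : ℕ → ℕ, ∃ Y ∈ J0, x ∈ Y := by
    intro x
    have h1 : ({x} : Set (ℕ → ℕ)) ∈ treeIdeal 𝕋 := by
      apply small_mem_t0 hctf
      rw [Cardinal.mk_singleton]
      exact lt_of_lt_of_le Cardinal.one_lt_aleph0 Cardinal.aleph0_le_continuum
    obtain ⟨Y, hY, hxY⟩ := hJ0cof _ h1
    exact ⟨Y, hY, hxY rfl⟩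
  obtain ⟨Y₀, hY₀, -⟩ := hsingle (fun _ => 0)
  have huniv : (Set.univ : Set (ℕ → ℕ)) ⊆ Y₀ := by
    intro x _
    obtain ⟨Y, hY, hxY⟩ := hsingle x
    rwa [hss hY hY₀] at hxY
  have ht0 : (Set.univ : Set (ℕ → ℕ)) ∈ treeIdeal 𝕋 := t0_mono huniv (hJ0sub hY₀)
  obtain ⟨S, hS, -, hd⟩ := ht0 Set.univ hctf.univ_mem
  obtain ⟨x, hx⟩ := branches_nonempty hctf hS
  exact absurd ⟨trivial, hx⟩ (Set.eq_empty_iff_forall_notMem.mp hd x)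

theorem cof_gt (hctf : CombTreeForcing 𝕋) (hsdap : SelectiveDisjointAntichainProp 𝕋) :
    Cardinal.continuum < (idealCof (treeIdeal 𝕋)).ord.cof := by
  classical
  by_contra hgoal
  have hcof : (idealCof (treeIdeal 𝕋)).ord.cof ≤ Cardinal.continuum := not_lt.mp hgoal
  -- a witnessing cofinal family of minimal cardinality
  have hSne : {c : Cardinal | ∃ J ⊆ treeIdeal 𝕋, Cardinal.mk J = c ∧
      ∀ X ∈ treeIdeal 𝕋, ∃ Y ∈ J, X ⊆ Y}.Nonempty :=
    ⟨Cardinal.mk (treeIdeal 𝕋), treeIdeal 𝕋, subset_rfl, rfl,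
      fun X hX => ⟨X, hX, subset_rfl⟩⟩
  have hμmem := csInf_mem hSne
  obtain ⟨J0, hJ0sub, hJ0card', hJ0cof⟩ := hμmem
  have hJ0card : Cardinal.mk J0 = idealCof (treeIdeal 𝕋) := hJ0card'
  have hμ1 : 1 < idealCof (treeIdeal 𝕋) :=
    one_lt_idealCof hctf hJ0sub hJ0card hJ0cof
  -- antichain data
  obtain ⟨ι, Tfam, hι, hTmem, -, hTdisj, hsel⟩ := hsdap
  haveI : Nonempty ι := Cardinal.mk_ne_zero_iff.mp (by
    rw [hι]; exact Cardinal.continuum_ne_zero)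
  -- enumeration of 𝕋 by kT
  have h𝕋card : Cardinal.mk 𝕋 ≤ Cardinal.mk kT := by
    rw [mk_kT]
    calc Cardinal.mk 𝕋 ≤ Cardinal.mk (Set (List ℕ)) := Cardinal.mk_set_le 𝕋
      _ = 2 ^ Cardinal.mk (List ℕ) := Cardinal.mk_set
      _ = 2 ^ Cardinal.aleph0 := by rw [Cardinal.mk_list_eq_aleph0]
      _ = Cardinal.continuum := Cardinal.two_power_aleph0
  obtain ⟨e𝕋⟩ := (Cardinal.le_def _ _).mp h𝕋card
  set eT : kT → Set (List ℕ) :=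
    fun δ => if h : ∃ t : 𝕋, e𝕋 t = δ then (h.choose : 𝕋).1 else Set.univ with heTdef
  have heT : ∀ δ, eT δ ∈ 𝕋 := by
    intro δ
    show (if h : ∃ t : 𝕋, e𝕋 t = δ then (h.choose : 𝕋).1 else Set.univ) ∈ 𝕋
    by_cases h : ∃ t : 𝕋, e𝕋 t = δ
    · rw [dif_pos h]
      exact h.choose.2
    · rw [dif_neg h]
      exact hctf.univ_mem
  have heTsurj : ∀ T ∈ 𝕋, ∃ δ : kT, eT δ = T := by
    intro T hT
    refine ⟨e𝕋 ⟨T, hT⟩, ?_⟩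
    have h : ∃ t : 𝕋, e𝕋 t = e𝕋 ⟨T, hT⟩ := ⟨⟨T, hT⟩, rfl⟩
    show (if h' : ∃ t : 𝕋, e𝕋 t = e𝕋 ⟨T, hT⟩ then (h'.choose : 𝕋).1 else Set.univ) = T
    rw [dif_pos h]
    have h2 := e𝕋.injective h.choose_spec
    rw [h2]
  -- decomposition of J0
  have hDfam : ∃ Dfam : kT → Set (Set (ℕ → ℕ)),
      (∀ δ, Dfam δ ⊆ J0) ∧
      (∀ δ, Cardinal.mk (Dfam δ) < idealCof (treeIdeal 𝕋)) ∧
      (∀ Y ∈ J0, ∃ δ : kT, Y ∈ Dfam δ) := by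
    by_cases hμc : idealCof (treeIdeal 𝕋) ≤ Cardinal.continuum
    · -- small cofinality cardinal: decompose into singletons
      have h1 : Cardinal.mk J0 ≤ Cardinal.mk kT := by
        rw [mk_kT, hJ0card]; exact hμc
      obtain ⟨eJ⟩ := (Cardinal.le_def _ _).mp h1
      refine ⟨fun δ => {Y | ∃ h : Y ∈ J0, eJ ⟨Y, h⟩ = δ}, ?_, ?_, ?_⟩
      · rintro δ Y ⟨hY, -⟩; exact hY
      · intro δ
        have hss : {Y | ∃ h : Y ∈ J0, eJ ⟨Y, h⟩ = δ}.Subsingleton := by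
          rintro Y ⟨hY, hYe⟩ Y' ⟨hY', hY'e⟩
          have : (⟨Y, hY⟩ : J0) = ⟨Y', hY'⟩ := eJ.injective (hYe.trans hY'e.symm)
          exact congrArg Subtype.val this
        exact lt_of_le_of_lt (Cardinal.mk_le_one_iff_set_subsingleton.mpr hss) hμ1
      · intro Y hY
        exact ⟨eJ ⟨Y, hY⟩, hY, rfl⟩
    · -- large cofinality cardinal: use cofinality of its ordinal
      push_neg at hμc
      have hμinf : Cardinal.aleph0 ≤ idealCof (treeIdeal 𝕋) :=
        Cardinal.aleph0_le_continuum.trans hμc.le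
      set μ := idealCof (treeIdeal 𝕋) with hμdef
      have hmkβ : Cardinal.mk μ.ord.ToType = Cardinal.mk J0 := by
        rw [Cardinal.mk_toType, Cardinal.card_ord, hJ0card]
      obtain ⟨eJ⟩ := Cardinal.eq.mp hmkβ
      haveI : IsWellOrder μ.ord.ToType (· < ·) := isWellOrder_lt
      obtain ⟨S, hSunb, hScard⟩ :=
        Order.exists_cof_eq μ.ord.ToType
      have hScard' : Cardinal.mk S ≤ Cardinal.mk kT := by
        rw [mk_kT, hScard, Ordinal.cof_toType]
        exact hcof
      obtain ⟨eS⟩ := (Cardinal.le_def _ _).mp hScard'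
      refine ⟨fun δ => {Y | ∃ (hY : Y ∈ J0) (b : S),
        eS b = δ ∧ eJ.symm ⟨Y, hY⟩ ≤ (b : μ.ord.ToType)}, ?_, ?_, ?_⟩
      · rintro δ Y ⟨hY, -⟩; exact hY
      · intro δ
        by_cases hne : ∃ Y, Y ∈ {Y | ∃ (hY : Y ∈ J0) (b : S),
            eS b = δ ∧ eJ.symm ⟨Y, hY⟩ ≤ (b : μ.ord.ToType)}
        · obtain ⟨Y₀, hY₀, b₀, heb₀, -⟩ := hne
          have hkey : ∀ Y ∈ {Y | ∃ (hY : Y ∈ J0) (b : S),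
              eS b = δ ∧ eJ.symm ⟨Y, hY⟩ ≤ (b : μ.ord.ToType)},
              ∃ hY : Y ∈ J0, eJ.symm ⟨Y, hY⟩ ≤ (b₀ : μ.ord.ToType) := by
            rintro Y ⟨hY, b, heb, hle⟩
            have hb : b = b₀ := eS.injective (heb.trans heb₀.symm)
            exact ⟨hY, hb ▸ hle⟩
          have hinj : Function.Injective (fun Y : {Y // Y ∈ {Y | ∃ (hY : Y ∈ J0) (b : S),
              eS b = δ ∧ eJ.symm ⟨Y, hY⟩ ≤ (b : μ.ord.ToType)}} =>
              (⟨eJ.symm ⟨Y.1, (hkey Y.1 Y.2).choose⟩,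
                (hkey Y.1 Y.2).choose_spec⟩ : Set.Iic (b₀ : μ.ord.ToType))) := by
            intro Y Y' h
            have h1 : (eJ.symm ⟨Y.1, (hkey Y.1 Y.2).choose⟩ : μ.ord.ToType) =
                eJ.symm ⟨Y'.1, (hkey Y'.1 Y'.2).choose⟩ := congrArg Subtype.val h
            have h2 := eJ.symm.injective h1
            have h3 := Subtype.ext_iff.mp h2
            exact Subtype.ext h3
          have h3 : Cardinal.mk {Y | ∃ (hY : Y ∈ J0) (b : S),
              eS b = δ ∧ eJ.symm ⟨Y, hY⟩ ≤ (b : μ.ord.ToType)} ≤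
              Cardinal.mk (Set.Iic (b₀ : μ.ord.ToType)) :=
            Cardinal.mk_le_of_injective hinj
          have h4 : Cardinal.mk (Set.Iic (b₀ : μ.ord.ToType)) < μ := by
            have h5 : Set.Iic (b₀ : μ.ord.ToType) =
                Set.Iio (b₀ : μ.ord.ToType) ∪ {(b₀ : μ.ord.ToType)} := by
              rw [Set.Iio_union_right]
            rw [h5]
            refine lt_of_le_of_lt (Cardinal.mk_union_le _ _) ?_
            refine Cardinal.add_lt_of_lt hμinf (Cardinal.mk_Iio_ord_toType _) ?_
            rw [Cardinal.mk_singleton]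
            exact hμ1
          exact lt_of_le_of_lt h3 h4
        · push_neg at hne
          refine lt_of_le_of_lt (Cardinal.mk_le_one_iff_set_subsingleton.mpr ?_) hμ1
          intro Y hY
          exact ((hne Y) hY).elim
      · intro Y hY
        obtain ⟨b, hbS, hble⟩ := hSunb (eJ.symm ⟨Y, hY⟩)
        exact ⟨eS ⟨b, hbS⟩, hY, ⟨b, hbS⟩, rfl, hble⟩
  obtain ⟨Dfam, hDsubJ, hDcard, hDcov⟩ := hDfam
  exact main_contra hctf hι hTmem hTdisj hsel heT
    (fun δ => (hDsubJ δ).trans hJ0sub) hDcard hJ0sub hJ0cof hDcov heTsurj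

end CTF

/-- If a combinatorial tree forcing `𝕋` has the selective disjoint antichain property, then
`cf(cof(t⁰)) > 𝔠 = 2^{ℵ₀}`. -/
theorem cof_treeIdeal_of_selectiveDisjointAntichain (𝕋 : Set (Set (List ℕ)))
    (hctf : CombTreeForcing 𝕋) (hsdap : SelectiveDisjointAntichainProp 𝕋) :
    Cardinal.continuum < (idealCof (treeIdeal 𝕋)).ord.cof := by
  exact CTF.cof_gt hctf hsdap
end

section
/- Miller forcing has the constant or one-to-one property: for every Miller tree T and every continuous function f : [T] → 2^ω there is a Miller tree S ⊆ T such that the restriction of f to [S] is either constant or injective. -/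
/-- A Miller tree: a tree in which every node has an extension with infinitely many
immediate successors in the tree. -/
def IsMiller (T : Set (List ℕ)) : Prop :=
  IsSeqTree T ∧ ∀ t ∈ T, ∃ s ∈ T, t <+: s ∧ {n : ℕ | s ++ [n] ∈ T}.Infinite

namespace MP

lemma sr_length (x : ℕ → ℕ) (n : ℕ) : (seqRestrict x n).length = n := by
  simp [seqRestrict]

lemma sr_getElem (x : ℕ → ℕ) {n i : ℕ} (h : i < (seqRestrict x n).length) :
    (seqRestrict x n)[i] = x i := by
  simp [seqRestrict]

lemma sr_take (x : ℕ → ℕ) {m n : ℕ} (h : m ≤ n) :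
    (seqRestrict x n).take m = seqRestrict x m := by
  apply List.ext_getElem
  · simp [seqRestrict, h]
  · intro i h1 h2
    simp [seqRestrict]

lemma sr_prefix (x : ℕ → ℕ) {m n : ℕ} (h : m ≤ n) :
    seqRestrict x m <+: seqRestrict x n := by
  rw [← sr_take x h]; exact List.take_prefix _ _

lemma prefix_sr {l : List ℕ} {x : ℕ → ℕ} {n : ℕ} (h : l <+: seqRestrict x n) :
    seqRestrict x l.length = l := by
  have h1 := List.prefix_iff_eq_take.mp h
  have h2 : l.length ≤ n := by
    have := h.length_le; simpa [sr_length] using this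
  conv_rhs => rw [h1]
  rw [sr_take x h2]

lemma sr_eq_iff {x y : ℕ → ℕ} {n : ℕ} :
    seqRestrict x n = seqRestrict y n ↔ ∀ i < n, x i = y i := by
  constructor
  · intro h i hi
    have hx : i < (seqRestrict x n).length := by simp [sr_length, hi]
    have hy : i < (seqRestrict y n).length := by simp [sr_length, hi]
    rw [← sr_getElem x hx, ← sr_getElem y hy]
    exact List.getElem_of_eq h hx
  · intro h
    apply List.ext_getElem (by simp [sr_length])
    intro i h1 h2
    rw [sr_getElem x h1, sr_getElem y h2]
    exact h i (by simpa [sr_length] using h1)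

def Through (x : ℕ → ℕ) (t : List ℕ) : Prop := seqRestrict x t.length = t

lemma through_of_prefix {x : ℕ → ℕ} {s t : List ℕ} (h : Through x t) (hst : s <+: t) :
    Through x s := by
  rw [← h] at hst
  exact prefix_sr hst

lemma through_sr (x : ℕ → ℕ) (n : ℕ) : Through x (seqRestrict x n) := by
  show seqRestrict x (seqRestrict x n).length = seqRestrict x n
  rw [sr_length]

lemma through_prefix_sr {x : ℕ → ℕ} {t : List ℕ} (h : Through x t) {n : ℕ}
    (hn : t.length ≤ n) : t <+: seqRestrict x n := by
  rw [← h]; exact sr_prefix x hn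

lemma branches_mono {S T : Set (List ℕ)} (h : S ⊆ T) : branches S ⊆ branches T :=
  fun _ hx n => h (hx n)

lemma open_pick {U : Set (ℕ → ℕ)} {x : ℕ → ℕ} (hU : IsOpen U) (hx : x ∈ U) :
    ∃ n : ℕ, ∀ y : ℕ → ℕ, (∀ i < n, y i = x i) → y ∈ U := by
  obtain ⟨I, u, hu, hsub⟩ := isOpen_pi_iff.mp hU x hx
  refine ⟨I.sup id + 1, fun y hy => hsub ?_⟩
  intro a ha
  have : y a = x a := hy a (Nat.lt_succ_of_le (Finset.le_sup (f := id) ha))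
  rw [this]
  exact (hu a ha).2

lemma isOpen_cyl (v : ℕ → Bool) (N : ℕ) : IsOpen {g : ℕ → Bool | ∀ c < N, g c = v c} := by
  have : {g : ℕ → Bool | ∀ c < N, g c = v c}
      = ⋂ c : Fin N, (fun g : ℕ → Bool => g (c : ℕ)) ⁻¹' ({v c} : Set Bool) := by
    ext g; simp [Fin.forall_iff]
  rw [this]
  exact isOpen_iInter_of_finite fun c =>
    (isOpen_discrete ({v c} : Set Bool)).preimage (continuous_apply (c : ℕ))

lemma decide_lemma {T : Set (List ℕ)} {f : (ℕ → ℕ) → (ℕ → Bool)}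
    (hf : ContinuousOn f (branches T)) {x : ℕ → ℕ} (hx : x ∈ branches T) (N : ℕ) :
    ∃ n, ∀ y ∈ branches T, seqRestrict y n = seqRestrict x n → ∀ c < N, f y c = f x c := by
  have hO : IsOpen {g : ℕ → Bool | ∀ c < N, g c = f x c} := isOpen_cyl _ _
  have hpre : f ⁻¹' {g : ℕ → Bool | ∀ c < N, g c = f x c} ∈ nhdsWithin x (branches T) :=
    (hf x hx) (hO.mem_nhds (fun c _ => rfl))
  obtain ⟨U, hUo, hxU, hsub⟩ := mem_nhdsWithin.mp hpre
  obtain ⟨n, hn⟩ := open_pick hUo hxU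
  exact ⟨n, fun y hy hsr c hc =>
    (hsub ⟨hn y (fun i hi => sr_eq_iff.mp hsr i hi), hy⟩) c hc⟩

lemma nat_rec_choice {α : Sort*} (a₀ : α) (P : α → α → Prop) (h : ∀ a, ∃ b, P a b) :
    ∃ g : ℕ → α, g 0 = a₀ ∧ ∀ n, P (g n) (g (n+1)) := by
  refine ⟨fun n => Nat.rec a₀ (fun _ a => Classical.choose (h a)) n, rfl, fun n => ?_⟩
  exact Classical.choose_spec (h _)

lemma branch_through {T : Set (List ℕ)} (hT : IsMiller T) {t : List ℕ} (ht : t ∈ T) :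
    ∃ x, x ∈ branches T ∧ Through x t := by
  have step : ∀ a : {l : List ℕ // l ∈ T ∧ t <+: l},
      ∃ b : {l : List ℕ // l ∈ T ∧ t <+: l}, a.val <+: b.val ∧ a.val.length < b.val.length := by
    rintro ⟨l, hl, htl⟩
    obtain ⟨s, hs, hls, hinf⟩ := hT.2 l hl
    obtain ⟨n, hn⟩ := hinf.nonempty
    refine ⟨⟨s ++ [n], hn, htl.trans (hls.trans (List.prefix_append _ _))⟩,
      hls.trans (List.prefix_append _ _), ?_⟩
    have := hls.length_le
    simp only [List.length_append, List.length_cons, List.length_nil]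
    omega
  obtain ⟨g, hg0, hgs⟩ := nat_rec_choice ⟨t, ht, List.prefix_refl t⟩ _ step
  have hchain : ∀ i j, i ≤ j → (g i).val <+: (g j).val := by
    intro i j hij
    induction j with
    | zero => cases Nat.le_zero.mp hij; exact List.prefix_refl _
    | succ j ih =>
      rcases Nat.lt_or_ge i (j+1) with h | h
      · exact (ih (by omega)).trans (hgs j).1
      · have : i = j+1 := by omega
        subst this; exact List.prefix_refl _
  have hlen : ∀ n, n ≤ (g n).val.length := by
    intro n
    induction n with
    | zero => omega
    | succ n ih => have := (hgs n).2; omega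
  set x : ℕ → ℕ := fun i => (g (i+1)).val.getD i 0 with hx
  have hkey : ∀ n, seqRestrict x n = (g n).val.take n := by
    intro n
    apply List.ext_getElem
    · simp [sr_length, hlen n]
    · intro i h1 h2
      have hin : i < n := by simpa [sr_length] using h1
      rw [sr_getElem x h1, List.getElem_take]
      have hi1 : i < (g (i+1)).val.length := by have := hlen (i+1); omega
      have hxi : x i = (g (i+1)).val[i] := by
        simp [hx, List.getD, List.getElem?_eq_getElem hi1]
      rw [hxi]
      rcases Nat.le_total (i+1) n with h | h
      · exact List.IsPrefix.getElem (hchain _ _ h) hi1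
      · exact (List.IsPrefix.getElem (hchain _ _ h) (by have := hlen n; omega)).symm
  have hxb : x ∈ branches T := by
    intro n
    rw [hkey n]
    exact hT.1.2 _ (g n).2.1 _ (List.take_prefix _ _)
  refine ⟨x, hxb, ?_⟩
  have htg : t <+: seqRestrict x t.length := by
    rw [hkey t.length]
    have h1 : t <+: (g t.length).val := (g t.length).2.2
    rw [List.prefix_iff_eq_take] at h1 ⊢
    conv_lhs => rw [h1]
    rw [List.take_take]
    simp
  exact prefix_sr htg

end MP

namespace MP

def Case2 (T : Set (List ℕ)) (f : (ℕ → ℕ) → (ℕ → Bool)) : Prop :=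
  ∀ t ∈ T, ∃ x, x ∈ branches T ∧ ∃ y, y ∈ branches T ∧ Through x t ∧ Through y t ∧ f x ≠ f y

lemma listBound (v₀ : ℕ → Bool) (l : List (ℕ → Bool)) :
    ∃ N, ∀ v ∈ l, v ≠ v₀ → ∃ c, c < N ∧ v c ≠ v₀ c := by
  induction l with
  | nil => exact ⟨0, by simp⟩
  | cons v l' ih =>
    obtain ⟨N', hN'⟩ := ih
    by_cases hv : v = v₀
    · refine ⟨N', fun w hw hne => ?_⟩
      rcases List.mem_cons.mp hw with h | h
      · exact absurd (h.trans hv) hne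
      · exact hN' w h hne
    · obtain ⟨c, hc⟩ := Function.ne_iff.mp hv
      refine ⟨max N' (c+1), fun w hw hne => ?_⟩
      rcases List.mem_cons.mp hw with h | h
      · subst h; exact ⟨c, by omega, hc⟩
      · obtain ⟨c', hc1, hc2⟩ := hN' w h hne
        exact ⟨c', by omega, hc2⟩

lemma incomp_decomp {u v : List ℕ} (h1 : ¬ u <+: v) (h2 : ¬ v <+: u) :
    ∃ c a b w w', a ≠ b ∧ u = c ++ a :: w ∧ v = c ++ b :: w' := by
  induction u generalizing v with
  | nil => exact absurd (List.nil_prefix) h1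
  | cons a u' ih =>
    cases v with
    | nil => exact absurd (List.nil_prefix) h2
    | cons b v' =>
      by_cases hab : a = b
      · subst hab
        have h1' : ¬ u' <+: v' := fun h => h1 (List.cons_prefix_cons.mpr ⟨rfl, h⟩)
        have h2' : ¬ v' <+: u' := fun h => h2 (List.cons_prefix_cons.mpr ⟨rfl, h⟩)
        obtain ⟨c, x, y, w, w', hxy, hu, hv⟩ := ih h1' h2'
        exact ⟨a :: c, x, y, w, w', hxy, by simp [hu], by simp [hv]⟩
      · exact ⟨[], a, b, u', v', hab, rfl, rfl⟩

lemma subseq_lemma (p : ℕ → ℕ → Bool) (hp : ∀ i j : ℕ, i ≠ j → p i ≠ p j) :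
    ∃ m : ℕ → ℕ, StrictMono m ∧ ∃ k : ℕ → ℕ,
      ∀ i j, i < j → ∃ c, c ≤ k i ∧ c ≤ k j ∧ p (m i) c ≠ p (m j) c := by
  obtain ⟨a, -, φ, hφ, hconv⟩ := IsCompact.tendsto_subseq (x := p)
    (s := (Set.univ : Set (ℕ → Bool))) isCompact_univ (fun n => trivial)
  set q : ℕ → ℕ → Bool := p ∘ φ with hq
  have hqinj : ∀ i j : ℕ, i ≠ j → q i ≠ q j :=
    fun i j hij => hp _ _ (fun h => hij (hφ.injective h))
  have hcv : ∀ K : ℕ, ∃ J : ℕ, ∀ j ≥ J, ∀ c ≤ K, q j c = a c := by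
    intro K
    have hO : IsOpen {g : ℕ → Bool | ∀ c < K+1, g c = a c} := isOpen_cyl _ _
    have hev : ∀ᶠ j in Filter.atTop, q j ∈ {g : ℕ → Bool | ∀ c < K+1, g c = a c} :=
      hconv (hO.mem_nhds (fun c _ => rfl))
    obtain ⟨J, hJ⟩ := Filter.eventually_atTop.mp hev
    exact ⟨J, fun j hj c hc => hJ j hj c (Nat.lt_succ_of_le hc)⟩
  have step : ∀ s : ℕ × ℕ, ∃ s' : ℕ × ℕ, s.1 < s'.1 ∧ s.2 ≤ s'.2 ∧
      (∀ c ≤ s.2, q s'.1 c = a c) ∧ ∃ c, c ≤ s'.2 ∧ q s'.1 c ≠ a c := by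
    rintro ⟨M, K⟩
    obtain ⟨J, hJ⟩ := hcv K
    set j₀ := max (M+1) J with hj₀
    by_cases hqa : q j₀ = a
    · have hne : q (j₀+1) ≠ a := by rw [← hqa]; exact hqinj _ _ (by omega)
      obtain ⟨c, hc⟩ := Function.ne_iff.mp hne
      exact ⟨(j₀+1, max K c), by simp; omega, le_max_left _ _,
        fun c' hc' => hJ _ (by omega) c' hc', c, le_max_right _ _, hc⟩
    · obtain ⟨c, hc⟩ := Function.ne_iff.mp hqa
      exact ⟨(j₀, max K c), by simp; omega, le_max_left _ _,
        fun c' hc' => hJ _ (by omega) c' hc', c, le_max_right _ _, hc⟩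
  obtain ⟨g, hg0, hgs⟩ := nat_rec_choice ((0, 0) : ℕ × ℕ) _ step
  have hKmono : Monotone (fun n => (g n).2) :=
    monotone_nat_of_le_succ fun n => (hgs n).2.1
  set m : ℕ → ℕ := fun i => (g (i+1)).1 with hm_def
  set k : ℕ → ℕ := fun i => (g (i+1)).2 with hk_def
  have hm : StrictMono m := strictMono_nat_of_lt_succ fun n => (hgs (n+1)).1
  refine ⟨φ ∘ m, hφ.comp hm, k, ?_⟩
  intro i j hij
  obtain ⟨c, hc1, hc2⟩ := (hgs i).2.2.2
  have hagree : q (m j) c = a c :=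
    (hgs j).2.2.1 c (le_trans hc1 (hKmono (show i+1 ≤ j by omega)))
  refine ⟨c, hc1, le_trans hc1 (hKmono (show i+1 ≤ j+1 by omega)), ?_⟩
  show q (m i) c ≠ q (m j) c
  rw [hagree]; exact hc2

variable {T : Set (List ℕ)} {f : (ℕ → ℕ) → (ℕ → Bool)}

lemma avoid (hT : IsMiller T) (hf : ContinuousOn f (branches T)) (h2 : Case2 T f)
    {t : List ℕ} (ht : t ∈ T) (l : List (ℕ → Bool)) :
    ∃ x, x ∈ branches T ∧ Through x t ∧ f x ∉ l := by
  by_contra hcon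
  push_neg at hcon
  obtain ⟨x₀, hx₀, hth₀⟩ := branch_through hT ht
  obtain ⟨N, hN⟩ := listBound (f x₀) l
  obtain ⟨n, hn⟩ := decide_lemma hf hx₀ N
  set n' := max n t.length with hn'
  set u := seqRestrict x₀ n' with hu
  have hun : u.length = n' := sr_length x₀ n'
  have huT : u ∈ T := hx₀ n'
  have htu : t <+: u := through_prefix_sr hth₀ (le_max_right n t.length)
  obtain ⟨x, hx, y, hy, hthx, hthy, hfxy⟩ := h2 u huT
  have key : ∀ z, z ∈ branches T → Through z u → f z = f x₀ := by
    intro z hz hth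
    have hth' : seqRestrict z u.length = u := hth
    rw [hun] at hth'
    have h1 : seqRestrict z n = seqRestrict x₀ n := by
      rw [← sr_take z (le_max_left n t.length), hth', hu,
        sr_take x₀ (le_max_left n t.length)]
    have h2' : ∀ c < N, f z c = f x₀ c := hn z hz h1
    have h3 : f z ∈ l := hcon z hz (through_of_prefix hth htu)
    by_contra hne
    obtain ⟨c, hcN, hcne⟩ := hN (f z) h3 hne
    exact hcne (h2' c hcN)
  exact hfxy ((key x hx hthx).trans (key y hy hthy).symm)

structure StepData (T : Set (List ℕ)) (f : (ℕ → ℕ) → (ℕ → Bool)) (t : List ℕ) where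
  split : List ℕ
  child : ℕ → List ℕ
  cidx : ℕ → ℕ
  len : ℕ → ℕ
  w : ℕ → ℕ → Bool
  split_mem : split ∈ T
  t_split : t <+: split
  cidx_inj : Function.Injective cidx
  child_mem : ∀ i, child i ∈ T
  child_ext : ∀ i, split ++ [cidx i] <+: child i
  decided : ∀ i, ∀ x, x ∈ branches T → Through x (child i) → ∀ c ≤ len i, f x c = w i c
  incompat : ∀ i j, i ≠ j → ∃ c, c ≤ len i ∧ c ≤ len j ∧ w i c ≠ w j c

lemma step_ex (hT : IsMiller T) (hf : ContinuousOn f (branches T)) (h2 : Case2 T f)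
    {t : List ℕ} (ht : t ∈ T) : Nonempty (StepData T f t) := by
  classical
  obtain ⟨s, hs, hts, hinf⟩ := hT.2 t ht
  -- Step recursion: build pairwise-distinct successors with pairwise-distinct values
  let Q : ℕ × (ℕ → ℕ) → Prop := fun p =>
    s ++ [p.1] ∈ T ∧ p.2 ∈ branches T ∧ Through p.2 (s ++ [p.1])
  let R : ℕ × (ℕ → ℕ) → ℕ × (ℕ → ℕ) → Prop := fun p q => p.1 ≠ q.1 ∧ f p.2 ≠ f q.2
  let L := {l : List (ℕ × (ℕ → ℕ)) // (∀ p ∈ l, Q p) ∧ l.Pairwise R}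
  have step : ∀ a : L, ∃ b : L, ∃ e, b.val = e :: a.val := by
    rintro ⟨l, hQl, hRl⟩
    obtain ⟨n, hnT, hn⟩ := hinf.exists_notMem_finset (l.map Prod.fst).toFinset
    obtain ⟨x, hxb, hxth, hxav⟩ := avoid hT hf h2 hnT (l.map (fun p => f p.2))
    refine ⟨⟨(n, x) :: l, ?_, ?_⟩, (n, x), rfl⟩
    · rintro p hp
      rcases List.mem_cons.mp hp with h | h
      · subst h; exact ⟨hnT, hxb, hxth⟩
      · exact hQl p h
    · refine List.pairwise_cons.mpr ⟨fun q hq => ⟨?_, ?_⟩, hRl⟩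
      · intro hqn
        exact hn (List.mem_toFinset.mpr (List.mem_map.mpr ⟨q, hq, hqn.symm⟩))
      · intro hfe
        exact hxav (List.mem_map.mpr ⟨q, hq, hfe.symm⟩)
  obtain ⟨g, hg0, hgs⟩ := nat_rec_choice (⟨[], by simp, List.Pairwise.nil⟩ : L) _ step
  let eseq : ℕ → ℕ × (ℕ → ℕ) := fun j => ((g (j+1)).val).headD (0, fun _ => 0)
  have hcons : ∀ j, (g (j+1)).val = eseq j :: (g j).val := by
    intro j
    obtain ⟨e, he⟩ := hgs j
    rw [he]; simp [eseq, he]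
  have hmem : ∀ i j, i < j → eseq i ∈ (g j).val := by
    intro i j hij
    induction j with
    | zero => omega
    | succ j ih =>
      rw [hcons j]
      rcases Nat.lt_or_ge i j with h | h
      · exact List.mem_cons_of_mem _ (ih h)
      · have : i = j := by omega
        subst this; exact List.mem_cons_self
  have hQe : ∀ i, Q (eseq i) := fun i =>
    (g (i+1)).2.1 _ (hmem i (i+1) (by omega))
  have hRe : ∀ i j, i < j → R (eseq j) (eseq i) := by
    intro i j hij
    have hp := (g (j+1)).2.2
    rw [hcons j] at hp
    exact (List.pairwise_cons.mp hp).1 _ (hmem i j hij)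
  set nseq : ℕ → ℕ := fun i => (eseq i).1 with hnseq
  set xseq : ℕ → ℕ → ℕ := fun i => (eseq i).2 with hxseq
  -- subsequence with incompatible values
  have hp : ∀ i j : ℕ, i ≠ j → (fun i => f (xseq i)) i ≠ (fun i => f (xseq i)) j := by
    intro i j hij
    rcases Nat.lt_or_ge i j with h | h
    · exact fun he => (hRe i j h).2 he.symm
    · have h' : j < i := by omega
      exact fun he => (hRe j i h').2 he
  obtain ⟨m, hm, k, hpair⟩ := subseq_lemma (fun i => f (xseq i)) hp
  · set X : ℕ → ℕ → ℕ := fun i => xseq (m i) with hX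
    have hXb : ∀ i, X i ∈ branches T := fun i => (hQe (m i)).2.1
    choose nd hnd using fun i => decide_lemma hf (hXb i) (k i + 1)
    set Lf : ℕ → ℕ := fun i => max (nd i) (s.length + 1) with hLf
    refine ⟨⟨s, fun i => seqRestrict (X i) (Lf i), fun i => nseq (m i), k,
      fun i => f (X i), hs, hts, ?_, fun i => hXb i (Lf i), ?_, ?_, ?_⟩⟩
    · intro i j hij
      by_contra hne
      have hmij : m i ≠ m j := fun h => hne (hm.injective h)
      rcases Nat.lt_or_ge (m i) (m j) with h | h
      · exact (hRe _ _ h).1 hij.symm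
      · have h' : m j < m i := by omega
        exact (hRe _ _ h').1 hij
    · intro i
      have hth : Through (X i) (s ++ [nseq (m i)]) := (hQe (m i)).2.2
      have hlen : (s ++ [nseq (m i)]).length ≤ Lf i := by
        simp only [hLf, List.length_append, List.length_cons, List.length_nil]
        exact le_trans (by omega) (le_max_right (nd i) (s.length + 1))
      exact through_prefix_sr hth hlen
    · intro i x hx hth c hc
      have hth' : seqRestrict x (Lf i) = seqRestrict (X i) (Lf i) := by
        have : seqRestrict x (seqRestrict (X i) (Lf i)).length = seqRestrict (X i) (Lf i) := hth
        rwa [sr_length] at this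
      have h1 : seqRestrict x (nd i) = seqRestrict (X i) (nd i) := by
        rw [← sr_take x (le_max_left _ _ : nd i ≤ Lf i), hth',
          sr_take (X i) (le_max_left _ _)]
      exact hnd i x hx h1 c (by omega)
    · intro i j hij
      rcases Nat.lt_or_ge i j with h | h
      · exact hpair i j h
      · have h' : j < i := by omega
        obtain ⟨c, h1, h2, h3⟩ := hpair j i h'
        exact ⟨c, h2, h1, h3.symm⟩


lemma prefix_eq {l₁ l₂ : List ℕ} (h : l₁ <+: l₂) (hl : l₂.length ≤ l₁.length) : l₁ = l₂ := by
  have h1 := List.prefix_iff_eq_take.mp h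
  have h2 : l₁.length = l₂.length := le_antisymm h.length_le hl
  rw [h1, h2, List.take_length]

lemma through_getElem {z : ℕ → ℕ} {t : List ℕ} (h : Through z t) {c : ℕ} (hc : c < t.length) :
    t[c] = z c := by
  have h' : seqRestrict z t.length = t := h
  have hc2 : c < (seqRestrict z t.length).length := by rw [sr_length]; exact hc
  calc t[c] = (seqRestrict z t.length)[c]'hc2 := (List.getElem_of_eq h' hc2).symm
    _ = z c := sr_getElem z hc2

lemma nil_mem (hT : IsMiller T) : ([] : List ℕ) ∈ T := by
  obtain ⟨l, hl⟩ := hT.1.1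
  exact hT.1.2 l hl [] List.nil_prefix

noncomputable def rootN (hT : IsMiller T) : {l : List ℕ // l ∈ T} := ⟨[], nil_mem hT⟩

section Construction

variable (hT : IsMiller T) (hf : ContinuousOn f (branches T)) (h2 : Case2 T f)

noncomputable def stepD (t : {l : List ℕ // l ∈ T}) : StepData T f t.val :=
  (step_ex hT hf h2 t.2).some

noncomputable def childN (t : {l : List ℕ // l ∈ T}) (i : ℕ) : {l : List ℕ // l ∈ T} :=
  ⟨(stepD hT hf h2 t).child i, (stepD hT hf h2 t).child_mem i⟩

lemma child_prefix (t : {l : List ℕ // l ∈ T}) (i : ℕ) :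
    (stepD hT hf h2 t).split ++ [(stepD hT hf h2 t).cidx i] <+: (childN hT hf h2 t i).val :=
  (stepD hT hf h2 t).child_ext i

lemma t_child_prefix (t : {l : List ℕ // l ∈ T}) (i : ℕ) :
    t.val <+: (childN hT hf h2 t i).val :=
  ((stepD hT hf h2 t).t_split.trans (List.prefix_append _ _)).trans (child_prefix hT hf h2 t i)

lemma child_len (t : {l : List ℕ // l ∈ T}) (i : ℕ) :
    t.val.length < (childN hT hf h2 t i).val.length := by
  have h1 := (stepD hT hf h2 t).t_split.length_le
  have h2' := (child_prefix hT hf h2 t i).length_le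
  simp only [List.length_append, List.length_cons, List.length_nil] at h2'
  omega

noncomputable def desc : List ℕ → {l : List ℕ // l ∈ T} → {l : List ℕ // l ∈ T}
  | [], t => t
  | i :: u, t => desc u (childN hT hf h2 t i)

noncomputable def Ebig (u : List ℕ) : List ℕ := (desc hT hf h2 u (rootN hT)).val

lemma desc_append (u v : List ℕ) (t : {l : List ℕ // l ∈ T}) :
    desc hT hf h2 (u ++ v) t = desc hT hf h2 v (desc hT hf h2 u t) := by
  induction u generalizing t with
  | nil => rfl
  | cons i u ih => simp only [List.cons_append, desc]; exact ih _

lemma desc_prefix (u : List ℕ) (t : {l : List ℕ // l ∈ T}) :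
    t.val <+: (desc hT hf h2 u t).val := by
  induction u generalizing t with
  | nil => exact List.prefix_refl _
  | cons i u ih => exact (t_child_prefix hT hf h2 t i).trans (ih _)

lemma desc_len (u : List ℕ) (t : {l : List ℕ // l ∈ T}) :
    t.val.length + u.length ≤ (desc hT hf h2 u t).val.length := by
  induction u generalizing t with
  | nil => simp [desc]
  | cons i u ih =>
    have h1 := child_len hT hf h2 t i
    have h2' := ih (childN hT hf h2 t i)
    simp only [desc, List.length_cons]
    omega

lemma E_snoc (u : List ℕ) (i : ℕ) :
    Ebig hT hf h2 (u ++ [i]) = (childN hT hf h2 (desc hT hf h2 u (rootN hT)) i).val := by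
  unfold Ebig
  rw [desc_append]
  rfl

lemma E_snoc_prefix (u : List ℕ) (i : ℕ) :
    Ebig hT hf h2 u <+: Ebig hT hf h2 (u ++ [i]) := by
  rw [E_snoc]
  exact t_child_prefix hT hf h2 _ i

lemma E_mono {u v : List ℕ} (h : u <+: v) :
    Ebig hT hf h2 u <+: Ebig hT hf h2 v := by
  obtain ⟨r, hr⟩ := h
  subst hr
  unfold Ebig
  rw [desc_append]
  exact desc_prefix hT hf h2 r _

lemma E_len (u : List ℕ) : u.length ≤ (Ebig hT hf h2 u).length := by
  have := desc_len hT hf h2 u (rootN hT)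
  simpa [rootN, Ebig] using this

lemma E_split_prefix (u : List ℕ) :
    Ebig hT hf h2 u <+: (stepD hT hf h2 (desc hT hf h2 u (rootN hT))).split :=
  (stepD hT hf h2 (desc hT hf h2 u (rootN hT))).t_split

lemma E_snoc_len (u : List ℕ) (i : ℕ) :
    (stepD hT hf h2 (desc hT hf h2 u (rootN hT))).split.length + 1
      ≤ (Ebig hT hf h2 (u ++ [i])).length := by
  rw [E_snoc]
  have := (child_prefix hT hf h2 (desc hT hf h2 u (rootN hT)) i).length_le
  simp only [List.length_append, List.length_cons, List.length_nil] at this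
  omega

lemma E_snoc_getElem (u : List ℕ) (i : ℕ)
    (h : (stepD hT hf h2 (desc hT hf h2 u (rootN hT))).split.length
      < (Ebig hT hf h2 (u ++ [i])).length) :
    (Ebig hT hf h2 (u ++ [i]))[(stepD hT hf h2 (desc hT hf h2 u (rootN hT))).split.length]
      = (stepD hT hf h2 (desc hT hf h2 u (rootN hT))).cidx i := by
  set t := desc hT hf h2 u (rootN hT)
  have hpre : (stepD hT hf h2 t).split ++ [(stepD hT hf h2 t).cidx i]
      <+: Ebig hT hf h2 (u ++ [i]) := by
    rw [E_snoc]
    exact child_prefix hT hf h2 t i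
  have hlt : (stepD hT hf h2 t).split.length
      < ((stepD hT hf h2 t).split ++ [(stepD hT hf h2 t).cidx i]).length := by
    simp
  rw [← hpre.getElem hlt]
  simp; rfl

lemma E_incomp {u v : List ℕ} (h1 : ¬ u <+: v) (h2' : ¬ v <+: u) :
    ¬ Ebig hT hf h2 u <+: Ebig hT hf h2 v := by
  intro hpre
  obtain ⟨c, a, b, w, w', hab, hu, hv⟩ := incomp_decomp h1 h2'
  subst hu; subst hv
  set t := desc hT hf h2 c (rootN hT) with ht
  set q := (stepD hT hf h2 t).split.length with hq
  have hsnoclen : ∀ e : ℕ, q + 1 ≤ (Ebig hT hf h2 (c ++ [e])).length := by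
    intro e
    have h3 := E_snoc_len hT hf h2 c e
    rw [← ht, ← hq] at h3
    exact h3
  have hqu : q < (Ebig hT hf h2 (c ++ a :: w)).length := by
    have h3 := hsnoclen a
    have h4 : Ebig hT hf h2 (c ++ [a]) <+: Ebig hT hf h2 (c ++ a :: w) :=
      E_mono hT hf h2 (by simpa using (List.prefix_append (c ++ [a]) w))
    have := h4.length_le
    omega
  have hqv : q < (Ebig hT hf h2 (c ++ b :: w')).length := by
    have h3 := hsnoclen b
    have h4 : Ebig hT hf h2 (c ++ [b]) <+: Ebig hT hf h2 (c ++ b :: w') :=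
      E_mono hT hf h2 (by simpa using (List.prefix_append (c ++ [b]) w'))
    have := h4.length_le
    omega
  have hgu : (Ebig hT hf h2 (c ++ a :: w))[q] = (stepD hT hf h2 t).cidx a := by
    have h4 : Ebig hT hf h2 (c ++ [a]) <+: Ebig hT hf h2 (c ++ a :: w) :=
      E_mono hT hf h2 (by simpa using (List.prefix_append (c ++ [a]) w))
    have h5 : q < (Ebig hT hf h2 (c ++ [a])).length := hsnoclen a
    rw [← h4.getElem h5]
    exact E_snoc_getElem hT hf h2 c a (by rw [← ht, ← hq]; exact h5)
  have hgv : (Ebig hT hf h2 (c ++ b :: w'))[q] = (stepD hT hf h2 t).cidx b := by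
    have h4 : Ebig hT hf h2 (c ++ [b]) <+: Ebig hT hf h2 (c ++ b :: w') :=
      E_mono hT hf h2 (by simpa using (List.prefix_append (c ++ [b]) w'))
    have h5 : q < (Ebig hT hf h2 (c ++ [b])).length := hsnoclen b
    rw [← h4.getElem h5]
    exact E_snoc_getElem hT hf h2 c b (by rw [← ht, ← hq]; exact h5)
  have : (stepD hT hf h2 t).cidx a = (stepD hT hf h2 t).cidx b := by
    rw [← hgu, ← hgv]
    exact hpre.getElem hqu
  exact hab ((stepD hT hf h2 t).cidx_inj this)

def Sset : Set (List ℕ) := {v | ∃ u : List ℕ, v <+: Ebig hT hf h2 u}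

lemma Sset_sub : Sset hT hf h2 ⊆ T := by
  rintro v ⟨u, hu⟩
  exact hT.1.2 _ (desc hT hf h2 u (rootN hT)).2 v hu

lemma Sset_miller : IsMiller (Sset hT hf h2) := by
  constructor
  · constructor
    · exact ⟨[], [], List.nil_prefix⟩
    · rintro v ⟨u, hu⟩ w hw
      exact ⟨u, hw.trans hu⟩
  · rintro v ⟨u, hu⟩
    set t := desc hT hf h2 u (rootN hT)
    refine ⟨(stepD hT hf h2 t).split, ?_, ?_, ?_⟩
    · refine ⟨u ++ [0], ?_⟩
      rw [E_snoc]
      exact (List.prefix_append _ _).trans (child_prefix hT hf h2 t 0)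
    · exact hu.trans (stepD hT hf h2 t).t_split
    · have hsub : Set.range (stepD hT hf h2 t).cidx
          ⊆ {n : ℕ | (stepD hT hf h2 t).split ++ [n] ∈ Sset hT hf h2} := by
        rintro n ⟨i, rfl⟩
        refine ⟨u ++ [i], ?_⟩
        rw [E_snoc]
        exact child_prefix hT hf h2 t i
      exact (Set.infinite_range_of_injective (stepD hT hf h2 t).cidx_inj).mono hsub

lemma keystep {x : ℕ → ℕ} (hx : x ∈ branches (Sset hT hf h2)) {u : List ℕ}
    (hu : Through x (Ebig hT hf h2 u)) :
    ∃ i, Through x (Ebig hT hf h2 (u ++ [i])) := by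
  classical
  set t := desc hT hf h2 u (rootN hT) with ht
  set q := (stepD hT hf h2 t).split.length with hq
  have hsnoclen : ∀ e : ℕ, q + 1 ≤ (Ebig hT hf h2 (u ++ [e])).length := by
    intro e
    have h3 := E_snoc_len hT hf h2 u e
    rw [← ht, ← hq] at h3
    exact h3
  have hqE : (Ebig hT hf h2 u).length ≤ q := (stepD hT hf h2 t).t_split.length_le
  have main : ∀ M, q + 1 ≤ M → (∃ i, Through x (Ebig hT hf h2 (u ++ [i]))) ∨
      (∃ i, (stepD hT hf h2 t).cidx i = x q ∧
        seqRestrict x M <+: Ebig hT hf h2 (u ++ [i])) := by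
    intro M hM
    obtain ⟨u', hvu'⟩ := hx M
    have h1 : Ebig hT hf h2 u <+: seqRestrict x M := through_prefix_sr hu (by omega)
    have h2'' : Ebig hT hf h2 u <+: Ebig hT hf h2 u' := h1.trans hvu'
    have hlenv : M ≤ (Ebig hT hf h2 u').length := by
      have := hvu'.length_le
      simpa [sr_length] using this
    have huu' : u <+: u' ∧ u ≠ u' := by
      constructor
      · by_contra hnp
        by_cases hpu : u' <+: u
        · have h3 : Ebig hT hf h2 u' <+: Ebig hT hf h2 u := E_mono hT hf h2 hpu
          have := h3.length_le
          omega
        · exact E_incomp hT hf h2 hnp hpu h2''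
      · intro h
        subst h
        omega
    obtain ⟨⟨r, hr⟩, hne⟩ := huu'
    have hrne : r ≠ [] := by
      intro h
      subst h
      simp at hr
      exact hne hr
    obtain ⟨i, r', rfl⟩ : ∃ i r', r = i :: r' := by
      cases r with
      | nil => exact absurd rfl hrne
      | cons i r' => exact ⟨i, r', rfl⟩
    have h3 : Ebig hT hf h2 (u ++ [i]) <+: Ebig hT hf h2 u' := by
      apply E_mono
      rw [← hr]
      refine ⟨r', by simp⟩
    have hlen1 : q + 1 ≤ (Ebig hT hf h2 (u ++ [i])).length := hsnoclen i
    rcases le_or_gt (Ebig hT hf h2 (u ++ [i])).length M with hcase | hcase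
    · have hpre : Ebig hT hf h2 (u ++ [i]) <+: seqRestrict x M :=
        List.prefix_of_prefix_length_le h3 hvu' (by rw [sr_length]; exact hcase)
      exact Or.inl ⟨i, prefix_sr hpre⟩
    · have hvE : seqRestrict x M <+: Ebig hT hf h2 (u ++ [i]) :=
        List.prefix_of_prefix_length_le hvu' h3 (by rw [sr_length]; omega)
      refine Or.inr ⟨i, ?_, hvE⟩
      have hq1 : q < M := hM
      have hq2 : q < (seqRestrict x M).length := by rw [sr_length]; omega
      have hvq : (seqRestrict x M)[q] = x q := sr_getElem x hq2
      have h4 : (seqRestrict x M)[q] = (Ebig hT hf h2 (u ++ [i]))[q]'(by omega) :=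
        hvE.getElem hq2
      rw [← hvq, h4]
      exact (E_snoc_getElem hT hf h2 u i (by rw [← ht, ← hq]; omega)).symm
  rcases main (q+1) (le_refl _) with h | ⟨i₀, hi₀, _⟩
  · exact h
  rcases main (max (q+1) (Ebig hT hf h2 (u ++ [i₀])).length)
      (le_max_left _ _) with h | ⟨i₁, hi₁, hpre⟩
  · exact h
  have hii : i₁ = i₀ := (stepD hT hf h2 t).cidx_inj (hi₁.trans hi₀.symm)
  subst hii
  have heq : seqRestrict x (max (q+1) (Ebig hT hf h2 (u ++ [i₁])).length)
      = Ebig hT hf h2 (u ++ [i₁]) :=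
    prefix_eq hpre (by rw [sr_length]; exact le_max_right _ _)
  refine ⟨i₁, ?_⟩
  have := through_sr x (max (q+1) (Ebig hT hf h2 (u ++ [i₁])).length)
  rwa [heq] at this

lemma Sset_inj : Set.InjOn f (branches (Sset hT hf h2)) := by
  classical
  have hsub : branches (Sset hT hf h2) ⊆ branches T := branches_mono (Sset_sub hT hf h2)
  have chain : ∀ z ∈ branches (Sset hT hf h2), ∃ uc : ℕ → List ℕ,
      uc 0 = [] ∧ (∀ n, ∃ i, uc (n+1) = uc n ++ [i]) ∧
      (∀ n, Through z (Ebig hT hf h2 (uc n))) := by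
    intro z hz
    have hroot : Through z (Ebig hT hf h2 []) := by
      show seqRestrict z (Ebig hT hf h2 []).length = Ebig hT hf h2 []
      have hnil : Ebig hT hf h2 [] = [] := by simp [Ebig, desc, rootN]
      rw [hnil]
      simp [seqRestrict]
    obtain ⟨g, hg0, hgs⟩ := nat_rec_choice
      (⟨[], hroot⟩ : {u : List ℕ // Through z (Ebig hT hf h2 u)})
      (fun a b => ∃ i, b.val = a.val ++ [i])
      (fun a => by
        obtain ⟨i, hi⟩ := keystep hT hf h2 hz a.2
        exact ⟨⟨a.val ++ [i], hi⟩, i, rfl⟩)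
    exact ⟨fun n => (g n).val, by simp [hg0], hgs, fun n => (g n).2⟩
  intro x hx y hy hfe
  obtain ⟨ux, hux0, huxs, huxth⟩ := chain x hx
  obtain ⟨uy, huy0, huys, huyth⟩ := chain y hy
  have hulen : ∀ (uc : ℕ → List ℕ), uc 0 = [] → (∀ n, ∃ i, uc (n+1) = uc n ++ [i]) →
      ∀ n, (uc n).length = n := by
    intro uc h0 hs n
    induction n with
    | zero => simp [h0]
    | succ n ih =>
      obtain ⟨i, hi⟩ := hs n
      rw [hi]
      simp [ih]
  by_cases hall : ∀ n, ux n = uy n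
  · funext c
    have h1 : Through x (Ebig hT hf h2 (ux (c+1))) := huxth (c+1)
    have h2' : Through y (Ebig hT hf h2 (ux (c+1))) := by
      rw [hall (c+1)]; exact huyth (c+1)
    have hlen : c < (Ebig hT hf h2 (ux (c+1))).length := by
      have := E_len hT hf h2 (ux (c+1))
      have := hulen ux hux0 huxs (c+1)
      omega
    rw [← through_getElem h1 hlen, ← through_getElem h2' hlen]
  · push_neg at hall
    have hex : ∃ n, ux n ≠ uy n := hall
    have hne₀ : ux (Nat.find hex) ≠ uy (Nat.find hex) := Nat.find_spec hex
    have hpos : Nat.find hex ≠ 0 := by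
      intro h
      rw [h, hux0, huy0] at hne₀
      exact hne₀ rfl
    obtain ⟨n', hn'⟩ : ∃ n', Nat.find hex = n' + 1 := ⟨Nat.find hex - 1, by omega⟩
    rw [hn'] at hne₀
    have heqn' : ux n' = uy n' := by
      by_contra hne'
      exact Nat.find_min hex (by omega) hne' 
    obtain ⟨i, hi⟩ := huxs n'
    obtain ⟨j, hj⟩ := huys n'
    have hij : i ≠ j := by
      intro h
      subst h
      rw [hi, hj, heqn'] at hne₀
      exact hne₀ rfl
    set t := desc hT hf h2 (ux n') (rootN hT) with htdef
    have hthx : Through x ((childN hT hf h2 t i).val) := by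
      have := huxth (n'+1)
      rw [hi, E_snoc] at this
      exact this
    have hthy : Through y ((childN hT hf h2 t j).val) := by
      have h5 := huyth (n'+1)
      rw [hj, ← heqn', E_snoc] at h5
      exact h5
    have hdx : ∀ c ≤ (stepD hT hf h2 t).len i, f x c = (stepD hT hf h2 t).w i c :=
      (stepD hT hf h2 t).decided i x (hsub hx) hthx
    have hdy : ∀ c ≤ (stepD hT hf h2 t).len j, f y c = (stepD hT hf h2 t).w j c :=
      (stepD hT hf h2 t).decided j y (hsub hy) hthy
    obtain ⟨c, hc1, hc2, hc3⟩ := (stepD hT hf h2 t).incompat i j hij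
    exfalso
    apply hc3
    rw [← hdx c hc1, ← hdy c hc2, hfe]

end Construction


lemma case2_main (hT : IsMiller T) (hf : ContinuousOn f (branches T)) (h2 : Case2 T f) :
    ∃ S : Set (List ℕ), IsMiller S ∧ S ⊆ T ∧ Set.InjOn f (branches S) :=
  ⟨Sset hT hf h2, Sset_miller hT hf h2, Sset_sub hT hf h2, Sset_inj hT hf h2⟩

lemma case1_main (hT : IsMiller T) {t₀ : List ℕ} (ht₀ : t₀ ∈ T)
    (hc : ∀ x, x ∈ branches T → ∀ y, y ∈ branches T →
      Through x t₀ → Through y t₀ → f x = f y) :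
    ∃ S : Set (List ℕ), IsMiller S ∧ S ⊆ T ∧ ∃ y : ℕ → Bool, ∀ x ∈ branches S, f x = y := by
  set S : Set (List ℕ) := {v | v ∈ T ∧ (v <+: t₀ ∨ t₀ <+: v)} with hS
  have hsub : S ⊆ T := fun v hv => hv.1
  have hmiller : IsMiller S := by
    constructor
    · constructor
      · exact ⟨t₀, ht₀, Or.inr (List.prefix_refl _)⟩
      · rintro v ⟨hvT, hv⟩ w hw
        refine ⟨hT.1.2 v hvT w hw, ?_⟩
        rcases hv with h | h
        · exact Or.inl (hw.trans h)
        · rcases le_or_gt w.length t₀.length with hl | hl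
          · exact Or.inl (List.prefix_of_prefix_length_le hw h hl)
          · exact Or.inr (List.prefix_of_prefix_length_le h hw (by omega))
    · rintro v ⟨hvT, hv⟩
      rcases hv with h | h
      · obtain ⟨s, hsT, hts, hinf⟩ := hT.2 t₀ ht₀
        refine ⟨s, ⟨hsT, Or.inr hts⟩, h.trans hts, ?_⟩
        refine hinf.mono ?_
        intro n hn
        exact ⟨hn, Or.inr (hts.trans (List.prefix_append _ _))⟩
      · obtain ⟨s, hsT, hts, hinf⟩ := hT.2 v hvT
        refine ⟨s, ⟨hsT, Or.inr (h.trans hts)⟩, hts, ?_⟩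
        refine hinf.mono ?_
        intro n hn
        exact ⟨hn, Or.inr ((h.trans hts).trans (List.prefix_append _ _))⟩
  obtain ⟨x₀, hx₀, hth₀⟩ := branch_through hT ht₀
  refine ⟨S, hmiller, hsub, f x₀, ?_⟩
  intro x hx
  have hxT : x ∈ branches T := branches_mono hsub hx
  have hthx : Through x t₀ := by
    have hmem : seqRestrict x t₀.length ∈ S := hx t₀.length
    have hlen : (seqRestrict x t₀.length).length = t₀.length := sr_length x t₀.length
    rcases hmem.2 with h | h
    · exact prefix_eq h (by omega)
    · exact (prefix_eq h (by omega)).symm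
  exact hc x hxT x₀ hx₀ hthx hth₀

end MP


/-- Miller forcing has the constant or one-to-one property: for every Miller tree `T` and
every continuous `f : [T] → 2^ω` there is a Miller tree `S ⊆ T` on which `f` is constant
or injective. -/
theorem miller_constant_or_one_to_one (T : Set (List ℕ)) (hT : IsMiller T)
    (f : (ℕ → ℕ) → (ℕ → Bool)) (hf : ContinuousOn f (branches T)) :
    ∃ S : Set (List ℕ), IsMiller S ∧ S ⊆ T ∧
      ((∃ y : ℕ → Bool, ∀ x ∈ branches S, f x = y) ∨ Set.InjOn f (branches S)) := by
  classical
  by_cases h2 : MP.Case2 T f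
  · obtain ⟨S, h1, h2', h3⟩ := MP.case2_main hT hf h2
    exact ⟨S, h1, h2', Or.inr h3⟩
  · rw [MP.Case2] at h2
    push_neg at h2
    obtain ⟨t₀, ht₀, hc⟩ := h2
    obtain ⟨S, h1, h2', y, h3⟩ := MP.case1_main hT ht₀
      (fun x hx y hy hthx hthy => hc x hx y hy hthx hthy)
    exact ⟨S, h1, h2', Or.inl ⟨y, h3⟩⟩
end

section
/- Let 𝕋 be a combinatorial tree forcing with the constant or one-to-one property. Then 𝕋 has the selective disjoint antichain property. -/
/-- `𝕋` has the constant or one-to-one property: for every `T ∈ 𝕋` and every continuous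
`f : [T] → 2^ω` there is `S ≤ T` in `𝕋` on which `f` is constant or injective. -/
def ConstantOrOneToOneProp (𝕋 : Set (Set (List ℕ))) : Prop :=
  ∀ T ∈ 𝕋, ∀ f : (ℕ → ℕ) → (ℕ → Bool), ContinuousOn f (branches T) →
    ∃ S ∈ 𝕋, S ⊆ T ∧
      ((∃ y : ℕ → Bool, ∀ x ∈ branches S, f x = y) ∨ Set.InjOn f (branches S))

lemma seqRestrict_getD (s : List ℕ) : seqRestrict (fun n => s.getD n 0) s.length = s := by
  apply List.ext_getElem
  · simp [seqRestrict]
  · intro n h1 h2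
    simp [seqRestrict, List.getD_eq_getElem _ _ h2]

/-- A combinatorial tree forcing with the constant or one-to-one property has the selective
disjoint antichain property. -/
theorem selectiveDisjointAntichain_of_constantOrOneToOne (𝕋 : Set (Set (List ℕ)))
    (hctf : CombTreeForcing 𝕋) (hc11 : ConstantOrOneToOneProp 𝕋) :
    SelectiveDisjointAntichainProp 𝕋 := by
  obtain ⟨f, hfc, hfib⟩ := hctf.large_disjoint
  choose Tfam hTmem hTfib using hfib
  have hdisj : ∀ a b : ℕ → Bool, a ≠ b →
      branches (Tfam a) ∩ branches (Tfam b) = ∅ := by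
    intro a b hab
    rw [← hTfib a, ← hTfib b]
    ext x
    simp only [Set.mem_inter_iff, Set.mem_preimage, Set.mem_singleton_iff, Set.mem_empty_iff_false,
      iff_false, not_and]
    intro h1 h2
    exact hab (h1 ▸ h2 ▸ rfl)
  refine ⟨ℕ → Bool, Tfam, ?_, hTmem, ?_, hdisj, ?_⟩
  · rw [← Cardinal.two_power_aleph0]
    simp [Cardinal.mk_arrow]
  · rintro a b hab ⟨R, hR, hRa, hRb⟩
    obtain ⟨i, _, _, _, g, _, _, hrange, _⟩ := hctf.homogeneity R hR
    have hx : g (fun _ => 0) ∈ branches R := hrange ▸ Set.mem_range_self _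
    have : g (fun _ => 0) ∈ branches (Tfam a) ∩ branches (Tfam b) :=
      ⟨branches_mono hRa hx, branches_mono hRb hx⟩
    rw [hdisj a b hab] at this
    exact this
  · intro T hT
    obtain ⟨S, hS, hST, hcase⟩ := hc11 T hT f hfc.continuousOn
    rcases hcase with ⟨y, hy⟩ | hinj
    · obtain ⟨i, hi_inj, hi_mono, hi_mem, g, hg, hemb, hrange, hiff⟩ := hctf.homogeneity S hS
      have hS0 : {t | ∃ s ∈ (Set.univ : Set (List ℕ)), t <+: i s} ∈ 𝕋 :=
        (hiff Set.univ ⟨⟨[], trivial⟩, fun _ _ _ _ => trivial⟩).1 hctf.univ_mem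
      have hS0S : {t | ∃ s ∈ (Set.univ : Set (List ℕ)), t <+: i s} ⊆ S := by
        rintro t ⟨s, -, hts⟩
        exact (hctf.isTree S hS).2 (i s) (hi_mem s) t hts
      refine ⟨_, hS0, hS0S.trans hST, Or.inl ⟨y, ?_⟩⟩
      rintro t ⟨s, -, hts⟩
      set x : ℕ → ℕ := fun n => s.getD n 0 with hxdef
      have hxs : seqRestrict x s.length = s := seqRestrict_getD s
      have hgx : g x ∈ branches S := hrange ▸ Set.mem_range_self x
      have hgxy : g x ∈ branches (Tfam y) := by
        rw [← hTfib y]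
        exact hy _ hgx
      have hkey := hg x s.length
      rw [hxs] at hkey
      exact (hctf.isTree _ (hTmem y)).2 _ (hgxy (i s).length) t (hkey ▸ hts)
    · refine ⟨S, hS, hST, Or.inr ?_⟩
      rintro a u ⟨huS, hua⟩ v ⟨hvS, hva⟩
      rw [← hTfib a] at hua hva
      exact hinj huS hvS (hua.trans hva.symm)
end
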